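/- arXiv:1402.2641 — 6 statements merged into one kernel-verified Lean document; each statement's English description precedes it below -/
import Mathlib

section
/- For every k ≥ 4, the k-wheel (the graph obtained from the chordless cycle C_k by adding a universal vertex adjacent to all cycle vertices) is a circular-arc graph but is not a normal Helly circular-arc graph. -/
open SimpleGraph

/-- The circle (of circumference 1), as the additive circle `ℝ / ℤ`. -/
abbrev Circ : Type := AddCircle (1 : ℝ)

/-- The closed arc of the circle obtained by projecting the real interval `[p.1, p.2]`. -/
def arcIcc (p : ℝ × ℝ) : Set Circ := (fun x : ℝ => (x : Circ)) '' Set.Icc p.1 p.2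

/-- `M` is a circular-arc model of the graph `G`: each vertex gets a (nonempty, closed) arc,
and two distinct vertices are adjacent iff their arcs intersect. -/
def IsCAModel {V : Type*} (G : SimpleGraph V) (M : V → ℝ × ℝ) : Prop :=
  (∀ v, (M v).1 ≤ (M v).2) ∧
  ∀ u v : V, u ≠ v → (G.Adj u v ↔ (arcIcc (M u) ∩ arcIcc (M v)).Nonempty)

/-- A circular-arc graph: the intersection graph of a finite set of arcs on a circle. -/
def IsCircularArcGraph {V : Type*} [Finite V] (G : SimpleGraph V) : Prop :=
  ∃ M : V → ℝ × ℝ, IsCAModel G M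

/-- A normal Helly circular-arc graph: the intersection graph of a finite set of arcs
on a circle, no three of which together cover the circle. -/
def IsNHCAGraph {V : Type*} [Finite V] (G : SimpleGraph V) : Prop :=
  ∃ M : V → ℝ × ℝ, IsCAModel G M ∧
    ∀ u v w : V, u ≠ v → u ≠ w → v ≠ w →
      arcIcc (M u) ∪ arcIcc (M v) ∪ arcIcc (M w) ≠ Set.univ

/-- `M` is an interval model of `G`: closed real intervals, adjacency iff intersection. -/
def IsIntervalModel {V : Type*} (G : SimpleGraph V) (M : V → ℝ × ℝ) : Prop :=
  (∀ v, (M v).1 ≤ (M v).2) ∧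
  ∀ u v : V, u ≠ v →
    (G.Adj u v ↔ (Set.Icc (M u).1 (M u).2 ∩ Set.Icc (M v).1 (M v).2).Nonempty)

/-- An interval graph: the intersection graph of a finite set of intervals on a line. -/
def IsIntervalGraph {V : Type*} [Finite V] (G : SimpleGraph V) : Prop :=
  ∃ M : V → ℝ × ℝ, IsIntervalModel G M

/-- The chordless path `P_m` on `m` vertices. -/
def pathG (m : ℕ) : SimpleGraph (Fin m) :=
  SimpleGraph.fromRel (fun i j => i.val + 1 = j.val)

/-- The chordless cycle `C_n` on `n` vertices (intended for `n ≥ 3`). -/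
def cycG (n : ℕ) : SimpleGraph (Fin n) :=
  SimpleGraph.fromRel (fun i j => (i.val + 1) % n = j.val)

/-- `G` contains an induced copy of `H`. -/
def HasInduced {W V : Type*} (H : SimpleGraph W) (G : SimpleGraph V) : Prop :=
  Nonempty (H ↪g G)

/-- Add one isolated vertex to a graph. -/
def addIsolated {V : Type*} (G : SimpleGraph V) : SimpleGraph (Option V) :=
  SimpleGraph.fromRel (fun u v => ∃ a b, u = some a ∧ v = some b ∧ G.Adj a b)

/-- Add one universal vertex to a graph. -/
def addUniversal {V : Type*} (G : SimpleGraph V) : SimpleGraph (Option V) :=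
  SimpleGraph.fromRel (fun u v => (∃ a b, u = some a ∧ v = some b ∧ G.Adj a b) ∨ u = none)

/-- `C_k^*`: the chordless cycle `C_k` plus an isolated vertex. -/
def cycStar (k : ℕ) : SimpleGraph (Option (Fin k)) := addIsolated (cycG k)

/-- The `k`-wheel: the chordless cycle `C_k` plus a universal vertex. -/
def wheelG (k : ℕ) : SimpleGraph (Option (Fin k)) := addUniversal (cycG k)

/-- The bipartite claw: `K_{1,3}` with every edge subdivided once. -/
def bipartiteClaw : SimpleGraph (Fin 7) :=
  SimpleGraph.fromEdgeSet {s(0,1), s(0,2), s(0,3), s(1,4), s(2,5), s(3,6)}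

/-- The umbrella: a path `0-1-2-3-4`, a hub `5` adjacent to all path vertices,
and a vertex `6` adjacent only to the middle vertex `2` of the path. -/
def umbrella : SimpleGraph (Fin 7) :=
  SimpleGraph.fromEdgeSet
    {s(0,1), s(1,2), s(2,3), s(3,4), s(5,0), s(5,1), s(5,2), s(5,3), s(5,4), s(6,2)}

/-- The net (= 2-net): a triangle with one pendant vertex at each corner. -/
def netG : SimpleGraph (Fin 6) :=
  SimpleGraph.fromEdgeSet {s(0,1), s(1,2), s(2,0), s(3,0), s(4,1), s(5,2)}

/-- The tent (= 3-tent = 3-sun). -/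
def tentG : SimpleGraph (Fin 6) :=
  SimpleGraph.fromEdgeSet
    {s(0,1), s(1,2), s(2,0), s(3,0), s(3,1), s(4,1), s(4,2), s(5,2), s(5,0)}

/-- The `k`-net (for `k ≥ 2`), with `k + 4` vertices: a chordless path
`p_0, …, p_k` (indices `0, …, k`), a vertex `q = k+1` adjacent to `p_0, …, p_{k-1}`,
a pendant `r = k+2` on `q`, and a pendant `t = k+3` on `p_0`. -/
def kNet (k : ℕ) : SimpleGraph (Fin (k + 4)) :=
  SimpleGraph.fromRel (fun a b =>
    (a.val + 1 = b.val ∧ b.val ≤ k) ∨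
    (a.val = k + 1 ∧ b.val + 1 ≤ k) ∨
    (a.val = k + 1 ∧ b.val = k + 2) ∨
    (a.val = 0 ∧ b.val = k + 3))

/-- The `k`-tent (for `k ≥ 3`), with `k + 3` vertices: a chordless path
`p_0, …, p_{k-3}` (indices `0, …, k-3`), a vertex `a = k-2` adjacent to `p_0`,
a vertex `q = k-1` adjacent to `a` and to `p_0, …, p_{k-4}`, a pendant `r = k` on `q`,
a vertex `z = k+1` adjacent to `a` and `q`, and a hub `h = k+2` adjacent to every
vertex except `z`.  For `k = 3` this is the `3`-sun. -/
def kTent (k : ℕ) : SimpleGraph (Fin (k + 3)) :=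
  SimpleGraph.fromRel (fun x y =>
    (x.val + 1 = y.val ∧ y.val + 3 ≤ k) ∨
    (x.val + 2 = k ∧ y.val = 0) ∨
    (x.val + 2 = k ∧ y.val + 1 = k) ∨
    (x.val + 1 = k ∧ y.val + 4 ≤ k) ∨
    (x.val = k + 1 ∧ (y.val + 2 = k ∨ y.val + 1 = k)) ∨
    (x.val + 1 = k ∧ y.val = k) ∨
    (x.val = k + 2 ∧ y.val ≤ k))

/-- The Trotter–Moore graph `G_1` (as described in the source): vertices `x=0, y=1, z=2,
w₁=3, w₂=4` with edges `xy`, `yz`, and `w₁, w₂` each adjacent to `x`, `y`, `z`. -/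
def G1 : SimpleGraph (Fin 5) :=
  SimpleGraph.fromEdgeSet
    {s(0,1), s(1,2), s(3,0), s(3,1), s(3,2), s(4,0), s(4,1), s(4,2)}

/-- The Trotter–Moore graph `G_2`: a four-cycle `0-1-2-3`, a vertex `4` adjacent to `0`,
a vertex `5` adjacent to `2`, and the edge `4-5`. -/
def G2 : SimpleGraph (Fin 6) :=
  SimpleGraph.fromEdgeSet {s(0,1), s(1,2), s(2,3), s(3,0), s(4,0), s(5,2), s(4,5)}

/-- The Trotter–Moore graph `G_3`: a five-cycle `0-1-2-3-4` plus a vertex `5`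
adjacent to `0`, `2` and `3`. -/
def G3 : SimpleGraph (Fin 6) :=
  SimpleGraph.fromEdgeSet {s(0,1), s(1,2), s(2,3), s(3,4), s(4,0), s(5,0), s(5,2), s(5,3)}

/-- The Trotter–Moore graph `G_4`: a five-cycle `0-1-2-3-4`, a vertex `5` adjacent to `0`,
a vertex `6` adjacent to `2`, and the edge `5-6`. -/
def G4 : SimpleGraph (Fin 7) :=
  SimpleGraph.fromEdgeSet
    {s(0,1), s(1,2), s(2,3), s(3,4), s(4,0), s(5,0), s(6,2), s(5,6)}

/-- The domino: two four-cycles sharing an edge (`C_6` plus one long chord). -/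
def dominoG : SimpleGraph (Fin 6) :=
  SimpleGraph.fromEdgeSet {s(0,1), s(1,2), s(2,3), s(3,4), s(4,5), s(5,0), s(0,3)}

/-- The complement of the chordless six-cycle. -/
def C6bar : SimpleGraph (Fin 6) := (cycG 6)ᶜ

/-- Gimbel's graph `F_1`: a chordless path `0-1-2-3-4` together with a vertex `5`
whose only neighbor is the middle vertex `2` of the path. -/
def F1 : SimpleGraph (Fin 6) :=
  SimpleGraph.fromEdgeSet {s(0,1), s(1,2), s(2,3), s(3,4), s(5,2)}

/-- The set `A_i` with respect to a chordless cycle `c : Fin n → V`: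
vertices off the cycle adjacent to `v_{i-1}` and `v_i` having a neighbor `w`
adjacent to `v_i` but not to `v_{i-1}`. -/
def Aset {V : Type*} {n : ℕ} [NeZero n] (G : SimpleGraph V) (c : Fin n → V) (i : Fin n) : Set V :=
  {v | v ∉ Set.range c ∧ G.Adj v (c (i - 1)) ∧ G.Adj v (c i) ∧
    ∃ w, G.Adj v w ∧ G.Adj w (c i) ∧ ¬ G.Adj w (c (i - 1))}

/-- The set `B_i`: vertices off the cycle adjacent to `v_i` and `v_{i+1}` having a
neighbor `w` adjacent to `v_i` but not to `v_{i+1}`. -/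
def Bset {V : Type*} {n : ℕ} [NeZero n] (G : SimpleGraph V) (c : Fin n → V) (i : Fin n) : Set V :=
  {v | v ∉ Set.range c ∧ G.Adj v (c i) ∧ G.Adj v (c (i + 1)) ∧
    ∃ w, G.Adj v w ∧ G.Adj w (c i) ∧ ¬ G.Adj w (c (i + 1))}

/-- The set `O_i`: vertices off the cycle whose unique neighbor on the cycle is `v_i`. -/
def Oset {V : Type*} {n : ℕ} (G : SimpleGraph V) (c : Fin n → V) (i : Fin n) : Set V :=
  {v | v ∉ Set.range c ∧ ∀ j, G.Adj v (c j) ↔ j = i}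

/-- The set `T_i`: vertices off the cycle whose neighbors on the cycle are exactly
`v_i` and `v_{i+1}`, and which belong to neither `B_i` nor `A_{i+1}`. -/
def Tset {V : Type*} {n : ℕ} [NeZero n] (G : SimpleGraph V) (c : Fin n → V) (i : Fin n) : Set V :=
  {v | v ∉ Set.range c ∧ (∀ j, G.Adj v (c j) ↔ (j = i ∨ j = i + 1)) ∧
    v ∉ Bset G c i ∪ Aset G c (i + 1)}

section HELPERS
lemma circ_coe_eq {x y : ℝ} : (x : Circ) = (y : Circ) ↔ ∃ n : ℤ, x = y + n := by
  constructor
  · intro h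
    have := QuotientAddGroup.eq.mp h.symm
    rw [AddSubgroup.mem_zmultiples_iff] at this
    obtain ⟨n, hn⟩ := this
    have : (n:ℝ) = -y + x := by exact_mod_cast by simpa using hn
    exact ⟨n, by linarith⟩
  · rintro ⟨n, rfl⟩
    have : ((n : ℝ) : Circ) = 0 := by
      rw [AddCircle.coe_eq_zero_iff]
      exact ⟨n, by simp⟩
    rw [AddCircle.coe_add, this, add_zero]

lemma mem_arcIcc {z : Circ} {p : ℝ × ℝ} : z ∈ arcIcc p ↔ ∃ x ∈ Set.Icc p.1 p.2, (x : Circ) = z := by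
  simp [arcIcc, Set.mem_image]

lemma arc_inter_nonempty {p q : ℝ × ℝ} :
    (arcIcc p ∩ arcIcc q).Nonempty ↔
    ∃ x ∈ Set.Icc p.1 p.2, ∃ y ∈ Set.Icc q.1 q.2, ∃ n : ℤ, x = y + n := by
  constructor
  · rintro ⟨z, hzp, hzq⟩
    rw [mem_arcIcc] at hzp hzq
    obtain ⟨x, hx, hxz⟩ := hzp
    obtain ⟨y, hy, hyz⟩ := hzq
    exact ⟨x, hx, y, hy, circ_coe_eq.mp (hxz.trans hyz.symm)⟩
  · rintro ⟨x, hx, y, hy, n, rfl⟩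
    exact ⟨(y : Circ), ⟨y + n, hx, (circ_coe_eq.mpr ⟨n, rfl⟩)⟩, ⟨y, hy, rfl⟩⟩

lemma exists_rep_Ico (z : Circ) (a : ℝ) : ∃ x ∈ Set.Ico a (a+1), (x : Circ) = z := by
  obtain ⟨y, rfl⟩ := QuotientAddGroup.mk_surjective z
  refine ⟨y + ⌈a - y⌉, ⟨by linarith [Int.le_ceil (a - y)],
    by linarith [Int.ceil_lt_add_one (a - y)]⟩, ?_⟩
  exact circ_coe_eq.mpr ⟨⌈a - y⌉, rfl⟩

lemma arc_univ {p : ℝ × ℝ} (h : 1 ≤ p.2 - p.1) : arcIcc p = Set.univ := by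
  rw [Set.eq_univ_iff_forall]
  intro z
  obtain ⟨x, hx, hxz⟩ := exists_rep_Ico z p.1
  exact ⟨x, ⟨hx.1, by linarith [hx.2]⟩, hxz⟩

lemma mod_succ_cases {k a : ℕ} (ha : a < k) :
    (a+1 < k ∧ (a+1) % k = a+1) ∨ (a+1 = k ∧ (a+1) % k = 0) := by
  rcases Nat.lt_or_ge (a+1) k with h | h
  · exact Or.inl ⟨h, Nat.mod_eq_of_lt h⟩
  · have : a + 1 = k := by omega
    exact Or.inr ⟨this, by rw [this, Nat.mod_self]⟩

lemma cyc_adj {k : ℕ} {i j : Fin k} :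
    (cycG k).Adj i j ↔ i ≠ j ∧ ((i.val + 1) % k = j.val ∨ (j.val + 1) % k = i.val) := by
  simp [cycG, fromRel_adj]

lemma wheel_adj_some_some {k : ℕ} {i j : Fin k} :
    (wheelG k).Adj (some i) (some j) ↔ (cycG k).Adj i j := by
  constructor
  · intro h
    rw [wheelG, addUniversal, fromRel_adj] at h
    obtain ⟨hne, h | h⟩ := h
    · rcases h with ⟨a,b,ha,hb,hab⟩|h
      · rw [Option.some.injEq] at ha hb; subst ha; subst hb; exact hab
      · simp at h
    · rcases h with ⟨a,b,ha,hb,hab⟩|h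
      · rw [Option.some.injEq] at ha hb; subst ha; subst hb; exact hab.symm
      · simp at h
  · intro h
    rw [wheelG, addUniversal, fromRel_adj]
    exact ⟨by simp [h.ne], Or.inl (Or.inl ⟨i, j, rfl, rfl, h⟩)⟩

lemma wheel_adj_none_some {k : ℕ} (i : Fin k) : (wheelG k).Adj none (some i) := by
  rw [wheelG, addUniversal, fromRel_adj]
  exact ⟨by simp, Or.inl (Or.inr rfl)⟩

lemma exists_ne_fin {k : ℕ} (hk : 4 ≤ k) (i : Fin k) : ∃ j : Fin k, j ≠ i := by
  refine ⟨if h : i.val = 0 then ⟨1, by omega⟩ else ⟨0, by omega⟩, ?_⟩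
  split_ifs with h <;> (intro he; rw [Fin.ext_iff] at he; simp at he; omega)

lemma anchor {a b cc dd t : ℝ} (hab : a ≤ b) (hcd : cc ≤ dd) (hlen : dd - cc < 1)
    (hmeet : ∃ s ∈ Set.Icc cc dd, ∃ s' ∈ Set.Icc a b, ∃ n : ℤ, s = s' + n)
    (ht : b < t) (ht2 : t < a + 1)
    (htin : ∃ t' ∈ Set.Icc cc dd, ∃ n : ℤ, t' = t + n) :
    (∀ u ∈ Set.Icc b t, ∃ x ∈ Set.Icc cc dd, ∃ n : ℤ, x = u + n) ∨
    (∀ u ∈ Set.Icc t (a+1), ∃ x ∈ Set.Icc cc dd, ∃ n : ℤ, x = u + n) := by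
  obtain ⟨s, hs, s', hs', n₁, hss⟩ := hmeet
  obtain ⟨t', ht', n₂, htt'⟩ := htin
  rcases le_total t' s with hts | hts
  · right
    have hkey : s - t' = s' + 1 - t := by
      have h1 : s - t' = s' - t + (n₁ - n₂ : ℤ) := by rw [hss, htt']; push_cast; ring
      have h2 : (0:ℝ) ≤ s - t' := by linarith
      have h3 : s - t' < 1 := by linarith [hs.1, hs.2, ht'.1, ht'.2]
      have hlow : (0:ℝ) < ((n₁ - n₂ : ℤ) : ℝ) := by
        have : s' - t < 0 := by linarith [hs'.2]
        linarith
      have hhigh : ((n₁ - n₂ : ℤ) : ℝ) < 2 := by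
        have : s' - t > -1 := by linarith [hs'.1]
        linarith
      have l1 : (0:ℤ) < n₁ - n₂ := by exact_mod_cast hlow
      have l2 : (n₁ - n₂ : ℤ) < 2 := by exact_mod_cast hhigh
      have hN : n₁ - n₂ = 1 := by omega
      rw [h1, hN]; push_cast; ring
    intro u hu
    refine ⟨t' + (u - t), ⟨by linarith [ht'.1, hu.1], ?_⟩, n₂, by rw [htt']; ring⟩
    have : u ≤ s' + 1 := by linarith [hu.2, hs'.1]
    linarith [hs.2]
  · left
    have hkey : t' - s = t - s' := by
      have h1 : t' - s = t - s' - (n₁ - n₂ : ℤ) := by rw [hss, htt']; push_cast; ring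
      have h2 : (0:ℝ) ≤ t' - s := by linarith
      have h3 : t' - s < 1 := by linarith [hs.1, hs.2, ht'.1, ht'.2]
      have hlow : (-1:ℝ) < ((n₁ - n₂ : ℤ) : ℝ) := by
        have : t - s' > 0 := by linarith [hs'.2]
        linarith
      have hhigh : ((n₁ - n₂ : ℤ) : ℝ) < 1 := by
        have : t - s' < 1 := by linarith [hs'.1]
        linarith
      have l1 : (-1:ℤ) < n₁ - n₂ := by exact_mod_cast hlow
      have l2 : (n₁ - n₂ : ℤ) < 1 := by exact_mod_cast hhigh
      have hN : n₁ - n₂ = 0 := by omega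
      rw [h1, hN]; push_cast; ring
    intro u hu
    refine ⟨t' + (u - t), ⟨?_, by linarith [ht'.2, hu.2]⟩, n₂, by rw [htt']; ring⟩
    have : s' ≤ u := by linarith [hu.1, hs'.2]
    linarith [hs.1]

lemma Icc_inter_gap {a b c d : ℝ} (hab : a ≤ b) (hcd : c ≤ d)
    (h : ¬ (Set.Icc a b ∩ Set.Icc c d).Nonempty) : b < c ∨ d < a := by
  by_contra hc
  push_neg at hc
  exact h ⟨max a c, ⟨⟨le_max_left _ _, max_le hab hc.1⟩,
    ⟨le_max_right _ _, max_le hc.2 hcd⟩⟩⟩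

lemma chainLem (c d : ℕ → ℝ) (hcd : ∀ j, c j ≤ d j) (m : ℝ) (s : ℕ) :
    ∀ t, s ≤ t →
    (∀ j, s ≤ j → j < t → ∃ z, z ∈ Set.Icc (c j) (d j) ∩ Set.Icc (c (j+1)) (d (j+1))) →
    m < c s → d t < m → ∃ l, s < l ∧ l ≤ t ∧ m ∈ Set.Icc (c l) (d l) := by
  intro t
  induction t with
  | zero =>
    intro hst _ h1 h2
    have hs : s = 0 := Nat.le_zero.mp hst
    subst hs
    exact absurd (lt_trans (lt_of_lt_of_le h1 (hcd 0)) h2) (lt_irrefl m)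
  | succ t ih =>
    intro hst hint h1 h2
    rcases Nat.lt_or_ge s (t+1) with hs | hs
    · have hst' : s ≤ t := by omega
      by_cases hdt : d t < m
      · obtain ⟨l, hl1, hl2, hl3⟩ := ih hst' (fun j a b => hint j a (by omega)) h1 hdt
        exact ⟨l, hl1, by omega, hl3⟩
      · push_neg at hdt
        by_cases hct : c t ≤ m
        · have hts : s < t := by
            rcases Nat.lt_or_ge s t with h | h
            · exact h
            · exfalso; have : s = t := by omega
              subst this; linarith
          exact ⟨t, hts, by omega, ⟨hct, hdt⟩⟩
        · push_neg at hct
          obtain ⟨z, ⟨hz1, _⟩, ⟨_, hz4⟩⟩ := hint t hst' (by omega)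
          exact absurd (lt_trans (lt_of_lt_of_le hct hz1) (lt_of_le_of_lt hz4 h2)) (lt_irrefl m)
    · have : s = t + 1 := by omega
      subst this
      exact absurd (lt_trans (lt_of_lt_of_le h1 (hcd (t+1))) h2) (lt_irrefl m)

lemma twoCover {ι : Type*} [Finite ι] [Nonempty ι] (S : ι → Set ℝ) (b e : ℝ) (hbe : b < e)
    (h : ∀ t ∈ Set.Ioo b e, ∃ i, Set.Icc b t ⊆ S i ∨ Set.Icc t e ⊆ S i) :
    ∃ i j, Set.Ioo b e ⊆ S i ∪ S j := by
  classical
  set L : Set ℝ := {t | t ∈ Set.Ioo b e ∧ ∃ i, Set.Icc b t ⊆ S i} with hL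
  set β : ℝ := sSup ({b} ∪ L) with hβ
  have hne : ({b} ∪ L).Nonempty := ⟨b, Or.inl rfl⟩
  have hbdd : BddAbove ({b} ∪ L) := by
    refine ⟨e, ?_⟩
    rintro x (hx | hx)
    · rw [Set.mem_singleton_iff] at hx; subst hx; exact hbe.le
    · exact hx.1.2.le
  have hβb : b ≤ β := le_csSup hbdd (Or.inl rfl)
  have hβe : β ≤ e := by
    apply csSup_le hne
    rintro x (hx | hx)
    · rw [Set.mem_singleton_iff] at hx; subst hx; exact hbe.le
    · exact hx.1.2.le
  have hdown : ∀ t, b < t → t < β → ∃ i, Set.Icc b t ⊆ S i := by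
    intro t h1 h2
    obtain ⟨l, hl, htl⟩ := exists_lt_of_lt_csSup hne h2
    rcases hl with hl | hl
    · rw [Set.mem_singleton_iff] at hl; subst hl; exact absurd h1 (not_lt.mpr htl.le)
    · obtain ⟨_, i, hi⟩ := hl
      exact ⟨i, fun x hx => hi ⟨hx.1, le_trans hx.2 htl.le⟩⟩
  have claim1 : b < β → ∃ i, Set.Ioo b β ⊆ S i := by
    intro hb
    have key : ∃ i, ∀ u, u < β → ∃ t, b < t ∧ t < β ∧ Set.Icc b t ⊆ S i ∧ u < t := by
      by_contra hc
      push_neg at hc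
      choose u hu1 hu2 using hc
      obtain ⟨i0, hi0⟩ := Finite.exists_max u
      have hW : max (u i0) b < β := max_lt (hu1 i0) hb
      set t := (max (u i0) b + β)/2 with hT
      have htW : max (u i0) b < t := by rw [hT]; linarith
      have ht1 : b < t := lt_of_le_of_lt (le_max_right _ _) htW
      have ht2 : t < β := by rw [hT]; linarith
      obtain ⟨i, hi⟩ := hdown t ht1 ht2
      have := hu2 i t ht1 ht2 hi
      have := le_trans (hi0 i) (le_max_left (u i0) b)
      linarith
    obtain ⟨i, hi⟩ := key
    refine ⟨i, fun t ht => ?_⟩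
    obtain ⟨t', _, _, h3, h4⟩ := hi t ht.2
    exact h3 ⟨ht.1.le, h4.le⟩
  have hup : ∀ t, β < t → t < e → ∃ j, Set.Icc t e ⊆ S j := by
    intro t h1 h2
    have hbt : b < t := lt_of_le_of_lt hβb h1
    obtain ⟨i, hi | hi⟩ := h t ⟨hbt, h2⟩
    · exfalso
      have : t ∈ L := ⟨⟨hbt, h2⟩, i, hi⟩
      have := le_csSup hbdd (Or.inr this)
      linarith
    · exact ⟨i, hi⟩
  have claim2 : β < e → ∃ j, Set.Ioo β e ⊆ S j := by
    intro hb
    have key : ∃ j, ∀ u, β < u → ∃ t, β < t ∧ t < e ∧ Set.Icc t e ⊆ S j ∧ t < u := by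
      by_contra hc
      push_neg at hc
      choose u hu1 hu2 using hc
      obtain ⟨i0, hi0⟩ := Finite.exists_min u
      have hW : β < min (u i0) e := lt_min (hu1 i0) hb
      set t := (β + min (u i0) e)/2 with hT
      have htW : t < min (u i0) e := by rw [hT]; linarith
      have ht1 : β < t := by rw [hT]; linarith
      have ht2 : t < e := lt_of_lt_of_le htW (min_le_right _ _)
      obtain ⟨j, hj⟩ := hup t ht1 ht2
      have := hu2 j t ht1 ht2 hj
      have := le_trans (min_le_left (u i0) e) (hi0 j)
      linarith
    obtain ⟨j, hj⟩ := key
    refine ⟨j, fun t ht => ?_⟩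
    obtain ⟨t', _, _, h3, h4⟩ := hj t ht.1
    exact h3 ⟨h4.le, ht.2.le⟩
  rcases eq_or_lt_of_le hβb with hb | hb
  · obtain ⟨j, hj⟩ := claim2 (hb ▸ hbe)
    exact ⟨j, j, fun t ht => Or.inl (hj (hb ▸ ht))⟩
  rcases eq_or_lt_of_le hβe with he | he
  · obtain ⟨i, hi⟩ := claim1 hb
    exact ⟨i, i, fun t ht => Or.inl (hi (he ▸ ht))⟩
  · obtain ⟨i, hi⟩ := claim1 hb
    obtain ⟨j, hj⟩ := claim2 he
    obtain ⟨i', hi' | hi'⟩ := h β ⟨hb, he⟩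
    · refine ⟨i', j, fun t ht => ?_⟩
      rcases le_or_gt t β with htb | htb
      · exact Or.inl (hi' ⟨ht.1.le, htb⟩)
      · exact Or.inr (hj ⟨htb, ht.2⟩)
    · refine ⟨i, i', fun t ht => ?_⟩
      rcases lt_or_ge t β with htb | htb
      · exact Or.inl (hi ⟨ht.1, htb⟩)
      · exact Or.inr (hi' ⟨htb, ht.2.le⟩)
end HELPERS

lemma part2 {k : ℕ} (hk : 4 ≤ k) : ¬ IsNHCAGraph (wheelG k) := by
  rintro ⟨M, ⟨hfst, hadj⟩, hP⟩
  have hk0 : 0 < k := by omega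
  haveI : Nonempty (Fin k) := ⟨⟨0, hk0⟩⟩
  -- Step 0: all arcs are proper
  have hlen : ∀ v, (M v).2 - (M v).1 < 1 := by
    intro v
    by_contra hc
    push_neg at hc
    have huniv : arcIcc (M v) = Set.univ := arc_univ hc
    obtain ⟨u, w, h1, h2, h3⟩ : ∃ u w : Option (Fin k), u ≠ v ∧ u ≠ w ∧ v ≠ w := by
      cases v with
      | none =>
        exact ⟨some ⟨0, hk0⟩, some ⟨1, by omega⟩, by simp,
          by simp [Fin.ext_iff], by simp⟩
      | some i =>
        obtain ⟨i', hi'⟩ := exists_ne_fin hk i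
        refine ⟨none, some i', by simp, by simp, ?_⟩
        simp only [ne_eq, Option.some.injEq]
        exact fun h => hi' h.symm
    apply hP u v w h1 h2 h3
    rw [Set.eq_univ_iff_forall]
    intro z
    exact Or.inl (Or.inr (by rw [huniv]; trivial))
  -- Step 1: the cycle arcs cover the circle
  have hcover : ∀ z : Circ, ∃ i : Fin k, z ∈ arcIcc (M (some i)) := by
    by_contra hc
    push_neg at hc
    obtain ⟨z, hz⟩ := hc
    obtain ⟨τ, _, hτ⟩ := exists_rep_Ico z 0
    subst hτ
    have key : ∀ i : Fin k, ∃ n : ℤ,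
        τ < (M (some i)).1 + n ∧ (M (some i)).2 + n < τ + 1 := by
      intro i
      refine ⟨⌈τ - (M (some i)).1⌉, ?_, ?_⟩
      · have h1 : τ ≤ (M (some i)).1 + ⌈τ - (M (some i)).1⌉ := by
          linarith [Int.le_ceil (τ - (M (some i)).1)]
        rcases eq_or_lt_of_le h1 with he | hl
        · exfalso
          apply hz i
          rw [mem_arcIcc]
          exact ⟨(M (some i)).1, ⟨le_refl _, hfst _⟩,
            circ_coe_eq.mpr ⟨-⌈τ - (M (some i)).1⌉, by push_cast; linarith⟩⟩
        · exact hl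
      · by_contra hc2
        push_neg at hc2
        apply hz i
        rw [mem_arcIcc]
        refine ⟨τ + 1 - ⌈τ - (M (some i)).1⌉, ⟨?_, by linarith⟩,
          circ_coe_eq.mpr ⟨1 - ⌈τ - (M (some i)).1⌉, by push_cast; ring⟩⟩
        linarith [Int.ceil_lt_add_one (τ - (M (some i)).1)]
    choose nn hn1 hn2 using key
    set g : ℕ → Fin k := fun n => ⟨n % k, Nat.mod_lt n hk0⟩ with hg
    set C : ℕ → ℝ := fun n => (M (some (g n))).1 + (nn (g n) : ℝ) with hC
    set D : ℕ → ℝ := fun n => (M (some (g n))).2 + (nn (g n) : ℝ) with hD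
    have hCD : ∀ n, C n ≤ D n := by
      intro n
      rw [hC, hD]
      simp only
      linarith [hfst (some (g n))]
    -- transfer arcs intersection to interval intersection
    have htrans : ∀ i j : Fin k,
        ((arcIcc (M (some i)) ∩ arcIcc (M (some j))).Nonempty ↔
          (Set.Icc ((M (some i)).1 + (nn i : ℝ)) ((M (some i)).2 + (nn i : ℝ)) ∩
           Set.Icc ((M (some j)).1 + (nn j : ℝ)) ((M (some j)).2 + (nn j : ℝ))).Nonempty) := by
      intro i j
      rw [arc_inter_nonempty]
      constructor
      · rintro ⟨x, hx, y, hy, n, rfl⟩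
        have hb1 : τ < y + n + (nn i : ℝ) := lt_of_lt_of_le (hn1 i) (by linarith [hx.1])
        have hb2 : y + n + (nn i : ℝ) < τ + 1 := lt_of_le_of_lt (by linarith [hx.2]) (hn2 i)
        have hb3 : τ < y + (nn j : ℝ) := lt_of_lt_of_le (hn1 j) (by linarith [hy.1])
        have hb4 : y + (nn j : ℝ) < τ + 1 := lt_of_le_of_lt (by linarith [hy.2]) (hn2 j)
        have hd1 : ((n + nn i - nn j : ℤ) : ℝ) < 1 := by push_cast; linarith
        have hd2 : (-1 : ℝ) < ((n + nn i - nn j : ℤ) : ℝ) := by push_cast; linarith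
        have l1 : (n + nn i - nn j : ℤ) < 1 := by exact_mod_cast hd1
        have l2 : (-1:ℤ) < (n + nn i - nn j : ℤ) := by exact_mod_cast hd2
        have hzero : n + nn i - nn j = 0 := by omega
        have heq : y + n + (nn i : ℝ) = y + (nn j : ℝ) := by
          have : ((n + nn i - nn j : ℤ) : ℝ) = 0 := by rw [hzero]; norm_num
          push_cast at this
          linarith
        exact ⟨y + (nn j : ℝ), by rw [← heq]; exact ⟨by linarith [hx.1], by linarith [hx.2]⟩,
          ⟨by linarith [hy.1], by linarith [hy.2]⟩⟩
      · rintro ⟨z, hz1, hz2⟩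
        exact ⟨z - (nn i : ℝ), ⟨by linarith [hz1.1], by linarith [hz1.2]⟩,
          z - (nn j : ℝ), ⟨by linarith [hz2.1], by linarith [hz2.2]⟩,
          nn j - nn i, by push_cast; ring⟩
    have hadj2 : ∀ p q : ℕ, g p ≠ g q →
        ((cycG k).Adj (g p) (g q) ↔
          (Set.Icc (C p) (D p) ∩ Set.Icc (C q) (D q)).Nonempty) := by
      intro p q hne
      rw [hC, hD]
      simp only
      exact (wheel_adj_some_some).symm.trans
        ((hadj _ _ (by simpa using hne)).trans (htrans (g p) (g q)))
    have hgval : ∀ p : ℕ, p < k → (g p).val = p := by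
      intro p hp
      rw [hg]
      exact Nat.mod_eq_of_lt hp
    -- consecutive intervals intersect
    have hconsec : ∀ j, j < k →
        ∃ z, z ∈ Set.Icc (C j) (D j) ∩ Set.Icc (C (j+1)) (D (j+1)) := by
      intro j hjk
      have hjm : (g j).val = j := hgval j hjk
      have hgj1 : (g (j+1)).val = (j+1) % k := rfl
      have hne : g j ≠ g (j+1) := by
        intro he
        have := congrArg Fin.val he
        rw [hjm, hgj1] at this
        rcases mod_succ_cases hjk with ⟨h1, h2⟩ | ⟨h1, h2⟩ <;> omega
      have hadjc : (cycG k).Adj (g j) (g (j+1)) := by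
        rw [cyc_adj]
        refine ⟨hne, Or.inl ?_⟩
        rw [hjm, hgj1]
      exact (hadj2 j (j+1) hne).mp hadjc
    -- I0 and I2 are disjoint
    have hne02 : g 0 ≠ g 2 := by
      intro he
      have := congrArg Fin.val he
      rw [hgval 0 (by omega), hgval 2 (by omega)] at this
      omega
    have hnadj02 : ¬ (cycG k).Adj (g 0) (g 2) := by
      rw [cyc_adj]
      rintro ⟨-, h | h⟩ <;>
        rw [hgval 0 (by omega), hgval 2 (by omega)] at h
      · rw [Nat.mod_eq_of_lt (by omega)] at h; omega
      · rw [Nat.mod_eq_of_lt (by omega)] at h; omega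
    have hI02 : ¬ (Set.Icc (C 0) (D 0) ∩ Set.Icc (C 2) (D 2)).Nonempty := by
      intro hne'
      exact hnadj02 ((hadj2 0 2 hne02).mpr hne')
    -- the middle vertex 1 covers the gap
    obtain ⟨z01, hz01a, hz01b⟩ := hconsec 0 (by omega)
    obtain ⟨z12, hz12a, hz12b⟩ := hconsec 1 (by omega)
    -- nonadjacency of 1 and l for 3 ≤ l ≤ k-1
    have hnadj1l : ∀ l, 3 ≤ l → l < k →
        ¬ (Set.Icc (C 1) (D 1) ∩ Set.Icc (C l) (D l)).Nonempty := by
      intro l h3 hlk hne'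
      have hnegl : g 1 ≠ g l := by
        intro he
        have := congrArg Fin.val he
        rw [hgval 1 (by omega), hgval l hlk] at this
        omega
      have := (hadj2 1 l hnegl).mpr hne'
      rw [cyc_adj] at this
      obtain ⟨-, h | h⟩ := this <;> rw [hgval 1 (by omega), hgval l hlk] at h
      · rw [Nat.mod_eq_of_lt (by omega)] at h; omega
      · rcases mod_succ_cases hlk with ⟨h1, h2⟩ | ⟨h1, h2⟩ <;> omega
    have hgk0 : g k = g 0 := by
      apply Fin.ext
      rw [hgval 0 (by omega)]
      exact Nat.mod_self k
    have hz01b' : z01 ∈ Set.Icc (C 1) (D 1) := by norm_num at hz01b; exact hz01b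
    have hz12b' : z12 ∈ Set.Icc (C 2) (D 2) := by norm_num at hz12b; exact hz12b
    have hDk : D k = D 0 := by simp only [hD, hgk0]
    have hCk : C k = C 0 := by simp only [hC, hgk0]
    clear_value g C D
    rcases Icc_inter_gap (hCD 0) (hCD 2) hI02 with hgap | hgap
    · -- Case A : D 0 < C 2
      set m : ℝ := (D 0 + C 2)/2 with hm
      have hm1 : m ∈ Set.Icc (C 1) (D 1) := by
        constructor
        · linarith [hz01b'.1, hz01a.2, hgap]
        · linarith [hz12a.2, hz12b'.1, hgap]
      obtain ⟨l, hl1, hl2, hl3⟩ := chainLem C D hCD m 2 k (by omega)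
        (fun j _ hjk => hconsec j hjk)
        (by rw [hm]; linarith)
        (by rw [hDk, hm]; linarith)
      rcases eq_or_lt_of_le hl2 with heq | hlt
      · rw [heq] at hl3
        have := hl3.2
        rw [hDk] at this
        rw [hm] at this
        linarith
      · exact hnadj1l l (by omega) hlt ⟨m, hm1, hl3⟩
    · -- Case B : D 2 < C 0 (reflect)
      set m : ℝ := (D 2 + C 0)/2 with hm
      have hm1 : m ∈ Set.Icc (C 1) (D 1) := by
        constructor
        · linarith [hz12a.1, hz12b'.2, hgap]
        · linarith [hz01a.1, hz01b'.2, hgap]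
      obtain ⟨l, hl1, hl2, hl3⟩ := chainLem (fun n => -(D n)) (fun n => -(C n))
        (fun n => neg_le_neg (hCD n)) (-m) 2 k (by omega)
        (fun j _ hjk => by
          obtain ⟨z, hz1, hz2⟩ := hconsec j hjk
          exact ⟨-z, ⟨⟨neg_le_neg hz1.2, neg_le_neg hz1.1⟩,
            ⟨neg_le_neg hz2.2, neg_le_neg hz2.1⟩⟩⟩)
        (by show -m < -(D 2); rw [hm]; linarith)
        (by show -(C k) < -m; rw [hCk, hm]; linarith)
      have hl3' : m ∈ Set.Icc (C l) (D l) := by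
        obtain ⟨h1, h2⟩ := hl3
        exact ⟨by linarith, by linarith⟩
      rcases eq_or_lt_of_le hl2 with heq | hlt
      · rw [heq] at hl3'
        have := hl3'.1
        rw [hCk] at this
        rw [hm] at this
        linarith
      · exact hnadj1l l (by omega) hlt ⟨m, hm1, hl3'⟩
  -- Step 2: use the hub arc to find three covering arcs
  have hab : (M none).1 ≤ (M none).2 := hfst none
  have hba : (M none).2 < (M none).1 + 1 := by linarith [hlen none]
  set S : Fin k → Set ℝ := fun i => {u : ℝ | (↑u : Circ) ∈ arcIcc (M (some i))} with hS
  have hanch : ∀ t ∈ Set.Ioo (M none).2 ((M none).1+1), ∃ i, Set.Icc (M none).2 t ⊆ S i ∨ Set.Icc t ((M none).1+1) ⊆ S i := by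
    intro t ht
    obtain ⟨i, hi⟩ := hcover (↑t)
    rw [mem_arcIcc] at hi
    obtain ⟨t', ht', he⟩ := hi
    obtain ⟨n₂, hn₂⟩ := circ_coe_eq.mp he
    have hmeets : (arcIcc (M none) ∩ arcIcc (M (some i))).Nonempty :=
      (hadj none (some i) (by simp)).mp (wheel_adj_none_some i)
    rw [arc_inter_nonempty] at hmeets
    obtain ⟨x, hx, y, hy, n, hxy⟩ := hmeets
    have hmeet2 : ∃ s ∈ Set.Icc (M (some i)).1 (M (some i)).2,
        ∃ s' ∈ Set.Icc (M none).1 (M none).2, ∃ n' : ℤ, s = s' + n' :=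
      ⟨y, hy, x, hx, -n, by push_cast; linarith⟩
    rcases anchor hab (hfst (some i)) (hlen (some i)) hmeet2 ht.1 ht.2
        ⟨t', ht', n₂, hn₂⟩ with h | h
    · refine ⟨i, Or.inl fun u hu => ?_⟩
      obtain ⟨x', hx', n', hxn⟩ := h u hu
      exact mem_arcIcc.mpr ⟨x', hx', circ_coe_eq.mpr ⟨n', hxn⟩⟩
    · refine ⟨i, Or.inr fun u hu => ?_⟩
      obtain ⟨x', hx', n', hxn⟩ := h u hu
      exact mem_arcIcc.mpr ⟨x', hx', circ_coe_eq.mpr ⟨n', hxn⟩⟩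
  obtain ⟨i, j, hij⟩ := twoCover S (M none).2 ((M none).1+1) (by linarith) hanch
  have huniv : arcIcc (M none) ∪ arcIcc (M (some i)) ∪ arcIcc (M (some j)) = Set.univ := by
    rw [Set.eq_univ_iff_forall]
    intro z
    obtain ⟨x, ⟨hx1, hx2⟩, hxz⟩ := exists_rep_Ico z (M none).2
    rcases eq_or_lt_of_le hx1 with he | hbx
    · exact Or.inl (Or.inl (mem_arcIcc.mpr ⟨x, ⟨by linarith, by linarith⟩, hxz⟩))
    rcases lt_or_ge x ((M none).1+1) with hxa | hxa
    · rcases hij ⟨hbx, hxa⟩ with hmem | hmem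
      · exact Or.inl (Or.inr (hxz ▸ hmem))
      · exact Or.inr (hxz ▸ hmem)
    · refine Or.inl (Or.inl (mem_arcIcc.mpr ⟨x - 1, ⟨by linarith, by linarith⟩, ?_⟩))
      rw [← hxz]
      exact circ_coe_eq.mpr ⟨-1, by push_cast; ring⟩
  by_cases hijne : i = j
  · subst hijne
    have h2 : arcIcc (M none) ∪ arcIcc (M (some i)) = Set.univ := by
      rwa [Set.union_assoc, Set.union_self] at huniv
    obtain ⟨j', hj'⟩ := exists_ne_fin hk i
    apply hP none (some i) (some j') (by simp) (by simp)
      (by simp only [ne_eq, Option.some.injEq]; exact fun h => hj' h.symm)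
    apply Set.eq_univ_of_univ_subset
    rw [← h2]
    exact Set.subset_union_left
  · exact hP none (some i) (some j) (by simp) (by simp)
      (by simp only [ne_eq, Option.some.injEq]; exact hijne) huniv

lemma arcs_inter_iff {k : ℕ} (hk : 4 ≤ k) (i j : Fin k) (hij : i ≠ j) :
    (arcIcc ((i:ℝ)/k, ((i:ℝ)+1)/k) ∩ arcIcc ((j:ℝ)/k, ((j:ℝ)+1)/k)).Nonempty ↔
      ((i.val + 1) % k = j.val ∨ (j.val + 1) % k = i.val) := by
  have hk0 : (0:ℝ) < k := by positivity
  have hik : (i:ℕ) < k := i.isLt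
  have hjk : (j:ℕ) < k := j.isLt
  have hijv : (i:ℕ) ≠ (j:ℕ) := fun h => hij (Fin.ext h)
  constructor
  · rintro ⟨z, hzp, hzq⟩
    rw [mem_arcIcc] at hzp hzq
    obtain ⟨x, ⟨hx1, hx2⟩, hxz⟩ := hzp
    obtain ⟨y, ⟨hy1, hy2⟩, hyz⟩ := hzq
    obtain ⟨n, hn⟩ := circ_coe_eq.mp (hxz.trans hyz.symm)
    simp only at hx1 hx2 hy1 hy2
    have hxk : ((i:ℕ):ℝ) ≤ x * k := (div_le_iff₀ hk0).mp hx1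
    have hxk2 : x * k ≤ ((i:ℕ):ℝ) + 1 := (le_div_iff₀ hk0).mp hx2
    have hyk : ((j:ℕ):ℝ) ≤ y * k := (div_le_iff₀ hk0).mp hy1
    have hyk2 : y * k ≤ ((j:ℕ):ℝ) + 1 := (le_div_iff₀ hk0).mp hy2
    have e : (k:ℝ) * n = x * k - y * k := by rw [hn]; ring
    have h1 : ((i:ℕ):ℝ) - (j:ℕ) - 1 ≤ (k:ℝ) * n := by rw [e]; linarith
    have h2 : (k:ℝ) * n ≤ ((i:ℕ):ℝ) - (j:ℕ) + 1 := by rw [e]; linarith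
    have h1' : ((i:ℕ):ℤ) - (j:ℕ) - 1 ≤ (k:ℤ) * n := by exact_mod_cast h1
    have h2' : (k:ℤ) * n ≤ ((i:ℕ):ℤ) - (j:ℕ) + 1 := by exact_mod_cast h2
    have hkZ : (4:ℤ) ≤ (k:ℤ) := by exact_mod_cast hk
    have hiZ : ((i:ℕ):ℤ) < k := by exact_mod_cast hik
    have hjZ : ((j:ℕ):ℤ) < k := by exact_mod_cast hjk
    have hn3 : n = 0 ∨ n = 1 ∨ n = -1 := by
      have hle : n ≤ 1 := by
        by_contra hc
        push_neg at hc
        have h2n : (2:ℤ) ≤ n := hc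
        have := mul_le_mul_of_nonneg_left h2n (by linarith : (0:ℤ) ≤ (k:ℤ))
        linarith
      have hge : -1 ≤ n := by
        by_contra hc
        push_neg at hc
        have h2n : n ≤ -2 := by linarith
        have := mul_le_mul_of_nonneg_left h2n (by linarith : (0:ℤ) ≤ (k:ℤ))
        linarith
      omega
    rcases mod_succ_cases hik with ⟨hlti, hmi⟩ | ⟨hei, hmi⟩ <;>
      rcases mod_succ_cases hjk with ⟨hltj, hmj⟩ | ⟨hej, hmj⟩ <;>
      rw [hmi, hmj] <;>
      rcases hn3 with rfl | rfl | rfl <;>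
      simp only [mul_zero, mul_one, mul_neg_one] at h1' h2' <;>
      omega
  · intro h
    rw [arc_inter_nonempty]
    have base1 : ∀ a : ℕ, a < k → ((a:ℝ)+1)/k ∈ Set.Icc ((a:ℝ)/k) (((a:ℝ)+1)/k) :=
      fun a _ => ⟨(div_le_div_iff_of_pos_right hk0).mpr (by linarith), le_refl _⟩
    have base2 : ∀ a : ℕ, a < k → ((a:ℝ))/k ∈ Set.Icc ((a:ℝ)/k) (((a:ℝ)+1)/k) :=
      fun a _ => ⟨le_refl _, (div_le_div_iff_of_pos_right hk0).mpr (by linarith)⟩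
    rcases mod_succ_cases hik with ⟨hlti, hmi⟩ | ⟨hei, hmi⟩ <;>
      rcases mod_succ_cases hjk with ⟨hltj, hmj⟩ | ⟨hej, hmj⟩ <;>
      rw [hmi, hmj] at h
    · rcases h with h | h
      · exact ⟨_, base1 i hik, _, base2 j hjk, 0, by push_cast [← h]; ring⟩
      · exact ⟨_, base2 i hik, _, base1 j hjk, 0, by push_cast [← h]; ring⟩
    · rcases h with h | h
      · exact ⟨_, base1 i hik, _, base2 j hjk, 0, by push_cast [← h]; ring⟩
      · refine ⟨_, base2 i hik, _, base1 j hjk, -1, ?_⟩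
        have hi0 : ((i:ℕ):ℝ) = 0 := by exact_mod_cast h.symm
        have hj1 : ((j:ℕ):ℝ) + 1 = k := by exact_mod_cast hej
        simp only [hi0, hj1]
        push_cast
        field_simp
        ring
    · rcases h with h | h
      · refine ⟨_, base1 i hik, _, base2 j hjk, 1, ?_⟩
        have hj0 : ((j:ℕ):ℝ) = 0 := by exact_mod_cast h.symm
        have hi1 : ((i:ℕ):ℝ) + 1 = k := by exact_mod_cast hei
        simp only [hj0, hi1]
        push_cast
        field_simp
        ring
      · exact ⟨_, base2 i hik, _, base1 j hjk, 0, by push_cast [← h]; ring⟩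
    · omega

noncomputable def wheelModel (k : ℕ) : Option (Fin k) → ℝ × ℝ
  | none => (0, 1)
  | some i => (((i:ℕ):ℝ)/k, (((i:ℕ):ℝ)+1)/k)

lemma part1 {k : ℕ} (hk : 4 ≤ k) : IsCircularArcGraph (wheelG k) := by
  have hk0 : (0:ℝ) < k := by positivity
  refine ⟨wheelModel k, ?_, ?_⟩
  · intro v
    cases v with
    | none => norm_num [wheelModel]
    | some i =>
      simp only [wheelModel]
      exact (div_le_div_iff_of_pos_right hk0).mpr (by linarith)
  · intro u v huv
    have hmem0 : ∀ i : Fin k, (((i:ℕ):ℝ)/k : ℝ) ∈ Set.Icc (0:ℝ) 1 := by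
      intro i
      constructor
      · positivity
      · rw [div_le_one hk0]
        exact_mod_cast i.isLt.le
    have hmem1 : ∀ i : Fin k,
        (((i:ℕ):ℝ)/k : ℝ) ∈ Set.Icc (((i:ℕ):ℝ)/k) ((((i:ℕ):ℝ)+1)/k) :=
      fun i => ⟨le_refl _, (div_le_div_iff_of_pos_right hk0).mpr (by linarith)⟩
    cases u with
    | none =>
      cases v with
      | none => exact absurd rfl huv
      | some i =>
        refine iff_of_true (wheel_adj_none_some i) ?_
        exact ⟨((((i:ℕ):ℝ)/k : ℝ) : Circ),
          ⟨((i:ℕ):ℝ)/k, hmem0 i, rfl⟩, ⟨((i:ℕ):ℝ)/k, hmem1 i, rfl⟩⟩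
    | some i =>
      cases v with
      | none =>
        refine iff_of_true ((wheel_adj_none_some i).symm) ?_
        exact ⟨((((i:ℕ):ℝ)/k : ℝ) : Circ),
          ⟨((i:ℕ):ℝ)/k, hmem1 i, rfl⟩, ⟨((i:ℕ):ℝ)/k, hmem0 i, rfl⟩⟩
      | some j =>
        have hij : i ≠ j := fun h => huv (by rw [h])
        rw [wheel_adj_some_some, cyc_adj]
        have := arcs_inter_iff hk i j hij
        constructor
        · intro h
          exact this.mpr h.2
        · intro h
          exact ⟨hij, this.mp h⟩


/-- For every `k ≥ 4`, the `k`-wheel is a circular-arc graph but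
not a normal Helly circular-arc graph. -/
theorem stmt2 (k : ℕ) (hk : 4 ≤ k) :
    IsCircularArcGraph (wheelG k) ∧ ¬ IsNHCAGraph (wheelG k) :=
  ⟨part1 hk, part2 hk⟩
end

section
/- Let G be an interval graph with an interval model in which the interval of vertex v has the leftmost left endpoint (no other endpoint lies strictly to its left) among all intervals. Then G contains no induced P_5 with v as its middle vertex, no induced copy of the graph F_1 (a P_5 together with an extra vertex whose only neighbor is the middle vertex of the P_5) with v as the extra vertex, and no induced copy of F_s for s ≥ 2 with v in the designated position. -/
open SimpleGraph

lemma icc_inter_nonempty (a b c d : ℝ) (h1 : a ≤ b) (h2 : c ≤ d) :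
    (Set.Icc a b ∩ Set.Icc c d).Nonempty ↔ a ≤ d ∧ c ≤ b := by
  rw [Set.Icc_inter_Icc, Set.nonempty_Icc, max_le_iff, le_min_iff, le_min_iff]
  exact ⟨fun h => ⟨h.1.2, h.2.1⟩, fun h => ⟨⟨h1, h.1⟩, ⟨h.2, h2⟩⟩⟩

/-- necessity in Gimbel's end-vertex characterization, cases `s = 0, 1`:
if `G` has an interval model in which the interval of `v` has the leftmost left
endpoint (no other endpoint lies further left), then `G` contains no induced `P_5`
with `v` as middle vertex and no induced `F_1` with `v` as the extra vertex. -/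
theorem stmt7 {V : Type*} [Finite V] (G : SimpleGraph V) (M : V → ℝ × ℝ)
    (hM : IsIntervalModel G M) (v : V)
    (hleft : ∀ u, (M v).1 ≤ (M u).1 ∧ (M v).1 ≤ (M u).2) :
    (¬ ∃ f : pathG 5 ↪g G, f 2 = v) ∧ (¬ ∃ f : F1 ↪g G, f 5 = v) := by
  obtain ⟨hlen, hadj⟩ := hM
  constructor
  · rintro ⟨f, hf⟩
    have inj := f.injective
    have key : ∀ i j : Fin 5, i ≠ j →
        ((pathG 5).Adj i j ↔
          (M (f i)).1 ≤ (M (f j)).2 ∧ (M (f j)).1 ≤ (M (f i)).2) := by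
      intro i j hij
      rw [← f.map_adj_iff, hadj _ _ (fun h => hij (inj h)),
        icc_inter_nonempty _ _ _ _ (hlen _) (hlen _)]
    rw [← hf] at hleft
    have h01 := (key 0 1 (by decide)).mp (by simp [pathG]; try decide)
    have h12 := (key 1 2 (by decide)).mp (by simp [pathG]; try decide)
    have h23 := (key 2 3 (by decide)).mp (by simp [pathG]; try decide)
    have h34 := (key 3 4 (by decide)).mp (by simp [pathG]; try decide)
    have n02 : ¬ (pathG 5).Adj 0 2 := by simp [pathG]; try decide
    have n24 : ¬ (pathG 5).Adj 2 4 := by simp [pathG]; try decide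
    have n13 : ¬ (pathG 5).Adj 1 3 := by simp [pathG]; try decide
    have h02 : ¬ ((M (f 0)).1 ≤ (M (f 2)).2 ∧ (M (f 2)).1 ≤ (M (f 0)).2) :=
      fun h => n02 ((key 0 2 (by decide)).mpr h)
    have h24 : ¬ ((M (f 2)).1 ≤ (M (f 4)).2 ∧ (M (f 4)).1 ≤ (M (f 2)).2) :=
      fun h => n24 ((key 2 4 (by decide)).mpr h)
    have hb0 : (M (f 2)).2 < (M (f 0)).1 := by
      by_contra h; push_neg at h; exact h02 ⟨h, (hleft (f 0)).2⟩
    have hb4 : (M (f 2)).2 < (M (f 4)).1 := by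
      by_contra h; push_neg at h
      exact h24 ⟨(hleft (f 4)).2, h⟩
    exact n13 ((key 1 3 (by decide)).mpr ⟨by linarith, by linarith⟩)
  · rintro ⟨f, hf⟩
    have inj := f.injective
    have key : ∀ i j : Fin 6, i ≠ j →
        (F1.Adj i j ↔
          (M (f i)).1 ≤ (M (f j)).2 ∧ (M (f j)).1 ≤ (M (f i)).2) := by
      intro i j hij
      rw [← f.map_adj_iff, hadj _ _ (fun h => hij (inj h)),
        icc_inter_nonempty _ _ _ _ (hlen _) (hlen _)]
    rw [← hf] at hleft
    have h01 := (key 0 1 (by decide)).mp (by simp [F1]; try decide)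
    have h12 := (key 1 2 (by decide)).mp (by simp [F1]; try decide)
    have h23 := (key 2 3 (by decide)).mp (by simp [F1]; try decide)
    have h34 := (key 3 4 (by decide)).mp (by simp [F1]; try decide)
    have h52 := (key 5 2 (by decide)).mp (by simp [F1]; try decide)
    have n50 : ¬ F1.Adj 5 0 := by simp [F1]; try decide
    have n54 : ¬ F1.Adj 5 4 := by simp [F1]; try decide
    have n02 : ¬ F1.Adj 0 2 := by simp [F1]; try decide
    have n24 : ¬ F1.Adj 2 4 := by simp [F1]; try decide
    have n13 : ¬ F1.Adj 1 3 := by simp [F1]; try decide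
    have h50 : ¬ ((M (f 5)).1 ≤ (M (f 0)).2 ∧ (M (f 0)).1 ≤ (M (f 5)).2) :=
      fun h => n50 ((key 5 0 (by decide)).mpr h)
    have h54 : ¬ ((M (f 5)).1 ≤ (M (f 4)).2 ∧ (M (f 4)).1 ≤ (M (f 5)).2) :=
      fun h => n54 ((key 5 4 (by decide)).mpr h)
    have h02 : ¬ ((M (f 0)).1 ≤ (M (f 2)).2 ∧ (M (f 2)).1 ≤ (M (f 0)).2) :=
      fun h => n02 ((key 0 2 (by decide)).mpr h)
    have h24 : ¬ ((M (f 2)).1 ≤ (M (f 4)).2 ∧ (M (f 4)).1 ≤ (M (f 2)).2) :=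
      fun h => n24 ((key 2 4 (by decide)).mpr h)
    have hb50 : (M (f 5)).2 < (M (f 0)).1 := by
      by_contra h; push_neg at h; exact h50 ⟨(hleft (f 0)).2, h⟩
    have hb54 : (M (f 5)).2 < (M (f 4)).1 := by
      by_contra h; push_neg at h; exact h54 ⟨(hleft (f 4)).2, h⟩
    have hlen0 := hlen (f 0)
    have hlen4 := hlen (f 4)
    have hb0 : (M (f 2)).2 < (M (f 0)).1 := by
      by_contra h; push_neg at h; exact h02 ⟨h, by linarith [h52.2]⟩
    have hb4 : (M (f 2)).2 < (M (f 4)).1 := by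
      by_contra h; push_neg at h; exact h24 ⟨by linarith [h52.2], h⟩
    exact n13 ((key 1 3 (by decide)).mpr ⟨by linarith, by linarith⟩)
end

section
/- Let G be a graph containing no induced 4-wheel and no induced C_m* for any m ≥ 4, let C = v_1...v_n v_1 (n ≥ 4) be a chordless cycle of G, and let v be a vertex not on C whose neighbors on C induce a chordless path containing v_i as an interior vertex (i.e., v is adjacent to v_{i-1}, v_i, v_{i+1}). Then v is adjacent to every vertex o with N_G(o) ∩ V(C) = {v_i}, provided the neighbors of any vertex outside C on C always induce a chordless path (which holds under the forbidden-subgraph hypotheses of the paper: no induced G_1, G_2, G_3, G_4, domino, k-wheel (k ≥ 4), or C_k* (k ≥ 4)). -/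
open SimpleGraph

open Fin.NatCast Fin.CommRing

section Stmt13Helpers

lemma my_fin_natCast_eq {n : ℕ} [NeZero n] (a b : ℕ) :
    ((a : Fin n) = (b : Fin n)) ↔ a % n = b % n := by
  rw [Fin.ext_iff, Fin.val_natCast, Fin.val_natCast]

lemma my_cyc_adj {n : ℕ} (x y : Fin n) :
    (cycG n).Adj x y ↔ x ≠ y ∧ ((x.val + 1) % n = y.val ∨ (y.val + 1) % n = x.val) := by
  simp [cycG, SimpleGraph.fromRel_adj]

lemma my_cyc_adj' {n : ℕ} [NeZero n] (hn : 2 ≤ n) (x y : Fin n) :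
    (cycG n).Adj x y ↔ x ≠ y ∧ (x + 1 = y ∨ y + 1 = x) := by
  have h1 : (1 : Fin n).val = 1 := by
    have : (1 : ℕ) < n := by omega
    simpa using Nat.mod_eq_of_lt this
  have key : ∀ a b : Fin n, ((a.val + 1) % n = b.val) ↔ a + 1 = b := by
    intro a b
    rw [Fin.ext_iff, Fin.add_def, h1]
  rw [my_cyc_adj, key, key]

lemma my_path_adj {m : ℕ} (a b : Fin m) :
    (pathG m).Adj a b ↔ a ≠ b ∧ (a.val + 1 = b.val ∨ b.val + 1 = a.val) := by
  simp [pathG, SimpleGraph.fromRel_adj]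

lemma my_path_reach {m : ℕ} (a b : Fin m) : (pathG m).Reachable a b := by
  have key : ∀ d : ℕ, ∀ a b : Fin m, b.val = a.val + d → (pathG m).Reachable a b := by
    intro d
    induction d with
    | zero =>
      intro a b h
      have hab : a = b := Fin.ext (by omega)
      subst hab; exact SimpleGraph.Reachable.refl a
    | succ d ih =>
      intro a b h
      have ha1 : a.val + 1 < m := by omega
      have hadj : (pathG m).Adj a ⟨a.val + 1, ha1⟩ := by
        rw [my_path_adj]; exact ⟨by simp [Fin.ext_iff], Or.inl rfl⟩
      exact (hadj.reachable).trans (ih ⟨a.val+1, ha1⟩ b (by simp; omega))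
  rcases le_total a.val b.val with h | h
  · exact key (b.val - a.val) a b (by omega)
  · exact (key (a.val - b.val) b a (by omega)).symm

lemma my_cycStar_adj {m : ℕ} (x y : Option (Fin m)) :
    (cycStar m).Adj x y ↔ ∃ a b, x = some a ∧ y = some b ∧ (cycG m).Adj a b := by
  rw [cycStar, addIsolated, SimpleGraph.fromRel_adj]
  constructor
  · rintro ⟨hne, h | h⟩ <;> obtain ⟨a, b, rfl, rfl, hab⟩ := h
    · exact ⟨a, b, rfl, rfl, hab⟩
    · exact ⟨b, a, rfl, rfl, hab.symm⟩
  · rintro ⟨a, b, rfl, rfl, hab⟩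
    exact ⟨by simpa using hab.ne, Or.inl ⟨a, b, rfl, rfl, hab⟩⟩

lemma my_walk_trans {m : ℕ} {P : Fin m → Prop}
    (hstep : ∀ a b : Fin m, (pathG m).Adj a b → P a → P b) :
    ∀ {a b : Fin m}, (pathG m).Walk a b → P a → P b := by
  intro a b w
  induction w with
  | nil => exact id
  | cons h w ih => exact fun ha => ih (hstep _ _ h ha)

end Stmt13Helpers

/-- Claim 2 of the paper: assuming no induced `4`-wheel, no induced
`C_m^*` (`m ≥ 4`), and that neighbors on `C` of vertices off `C` always induce a
chordless path, any vertex `v` off `C` adjacent to `v_{i-1}`, `v_i`, `v_{i+1}` is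
adjacent to every vertex `o ∈ O_i`. -/
theorem stmt13 {V : Type*} [Finite V] (G : SimpleGraph V)
    (h4w : ¬ HasInduced (wheelG 4) G)
    (hstar : ∀ m, 4 ≤ m → ¬ HasInduced (cycStar m) G)
    {n : ℕ} [NeZero n] (hn : 4 ≤ n) (c : cycG n ↪g G)
    (hpath : ∀ u ∉ Set.range ⇑c, (∃ j, G.Adj u (c j)) →
      ∃ m, ∃ p : pathG m ↪g G,
        Set.range ⇑p = {x | x ∈ Set.range ⇑c ∧ G.Adj u x})
    (i : Fin n) (v : V) (hv : v ∉ Set.range ⇑c)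
    (h1 : G.Adj v (c (i - 1))) (h2 : G.Adj v (c i)) (h3 : G.Adj v (c (i + 1)))
    (o : V) (ho : o ∈ Oset G ⇑c i) :
    G.Adj v o := by
  classical
  by_contra hvo
  obtain ⟨ho1, ho2⟩ := ho
  have hn2 : 2 ≤ n := by omega
  have hnpos : 0 < n := by omega
  have hone : (1 : Fin n) ≠ 0 := by
    have h10 : ((1:ℕ) : Fin n) ≠ ((0:ℕ) : Fin n) := by
      rw [Ne, my_fin_natCast_eq, Nat.mod_eq_of_lt (by omega), Nat.mod_eq_of_lt (by omega)]
      omega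
    simpa using h10
  have hcast_inj : ∀ a b : ℕ, a < n → b < n → ((a : Fin n) = (b : Fin n) ↔ a = b) := by
    intro a b ha hb
    rw [my_fin_natCast_eq, Nat.mod_eq_of_lt ha, Nat.mod_eq_of_lt hb]
  have hicast : ∀ a b : ℕ, (i + (a : Fin n) = i + (b : Fin n)) ↔ (a : Fin n) = (b : Fin n) := by
    intro a b
    constructor
    · exact fun h => add_left_cancel h
    · intro h; rw [h]
  have hneg : ((n - 1 : ℕ) : Fin n) = -1 := by
    have hs : ((n - 1 : ℕ) : Fin n) + 1 = 0 := by
      have h' : ((n - 1 : ℕ) : Fin n) + 1 = ((n - 1 + 1 : ℕ) : Fin n) := by push_cast; ring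
      rw [h', show n - 1 + 1 = n by omega]
      exact Fin.natCast_self n
    exact eq_neg_of_add_eq_zero_left hs
  have hov : o ≠ v := by
    intro h; subst h
    have hii := (ho2 (i+1)).mp h3
    apply hone
    have h' : i + 1 = i + 0 := by rw [add_zero]; exact hii
    exact add_left_cancel h'
  -- Step 1: v is not adjacent to every cycle vertex
  have hnotall : ¬ ∀ j : Fin n, G.Adj v (c j) := by
    intro hall
    obtain ⟨m, p, hr⟩ := hpath v hv ⟨i, h2⟩
    have hrc : Set.range ⇑p = Set.range ⇑c := by
      rw [hr]; ext x
      constructor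
      · exact fun hx => hx.1
      · intro hx
        exact ⟨hx, by obtain ⟨j, rfl⟩ := hx; exact hall j⟩
    have hmpos : 0 < m := by
      have hci : c i ∈ Set.range ⇑p := by rw [hrc]; exact ⟨i, rfl⟩
      obtain ⟨k, _⟩ := hci
      exact k.pos
    set z : Fin m := ⟨0, hmpos⟩ with hz
    have hpz : p z ∈ Set.range ⇑c := by rw [← hrc]; exact ⟨z, rfl⟩
    obtain ⟨j, hj⟩ := hpz
    have hfin_ne : ∀ (x d : Fin n), d ≠ 0 → x ≠ x + d := by
      intro x d hd h
      apply hd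
      have h0 : x + 0 = x + d := by rw [add_zero]; exact h
      exact (add_left_cancel h0).symm
    obtain ⟨k1, hk1⟩ : c (j + 1) ∈ Set.range ⇑p := by rw [hrc]; exact ⟨j+1, rfl⟩
    obtain ⟨k2, hk2⟩ : c (j - 1) ∈ Set.range ⇑p := by rw [hrc]; exact ⟨j-1, rfl⟩
    have hadj1 : (cycG n).Adj j (j + 1) := by
      rw [my_cyc_adj' hn2]
      exact ⟨hfin_ne j 1 hone, Or.inl rfl⟩
    have hadj2 : (cycG n).Adj j (j - 1) := by
      rw [my_cyc_adj' hn2]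
      refine ⟨?_, Or.inr (sub_add_cancel j 1)⟩
      have := hfin_ne j (-1) (neg_ne_zero.mpr hone)
      rwa [← sub_eq_add_neg] at this
    have hp1 : (pathG m).Adj z k1 :=
      p.map_rel_iff.mp (by rw [hk1, ← hj]; exact c.map_rel_iff.mpr hadj1)
    have hp2 : (pathG m).Adj z k2 :=
      p.map_rel_iff.mp (by rw [hk2, ← hj]; exact c.map_rel_iff.mpr hadj2)
    have hzv : z.val = 0 := rfl
    have hk1v : k1.val = 1 := by
      obtain ⟨_, hor⟩ := (my_path_adj z k1).mp hp1
      omega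
    have hk2v : k2.val = 1 := by
      obtain ⟨_, hor⟩ := (my_path_adj z k2).mp hp2
      omega
    have hk12 : k1 = k2 := Fin.ext (by omega)
    rw [hk12] at hk1
    have hj2 : j + 1 = j - 1 := c.injective (hk1.symm.trans hk2)
    have h1m1 : (1 : Fin n) = -1 := by
      have h' : j + 1 = j + (-1) := by rw [← sub_eq_add_neg]; exact hj2
      exact add_left_cancel h'
    have h20 : ((2:ℕ) : Fin n) = ((0:ℕ) : Fin n) := by
      push_cast
      linear_combination h1m1
    rw [my_fin_natCast_eq, Nat.mod_eq_of_lt (by omega), Nat.mod_eq_of_lt (by omega)] at h20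
    omega
  set Q : ℕ → Prop := fun t => G.Adj v (c (i + (t : Fin n))) with hQdef
  have hQadj : ∀ t : ℕ, Q t ↔ G.Adj v (c (i + (t : Fin n))) := fun t => Iff.rfl
  have hQ0 : Q 0 := by rw [hQadj]; simpa using h2
  have hQ1 : Q 1 := by rw [hQadj]; simpa using h3
  have hQn1 : Q (n-1) := by
    rw [hQadj, hneg, ← sub_eq_add_neg]
    exact h1
  obtain ⟨t₀, ht₀n, ht₀⟩ : ∃ t, t ≤ n - 1 ∧ ¬ Q t := by
    rcases not_forall.mp hnotall with ⟨j₀, hj₀⟩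
    refine ⟨(j₀ - i).val, by have := (j₀ - i).isLt; omega, ?_⟩
    rw [hQadj]
    have hji : i + (((j₀ - i).val : ℕ) : Fin n) = j₀ := by
      rw [Fin.cast_val_eq_self]; ring
    rw [hji]
    exact hj₀
  have hex : ∃ t, ¬ Q t := ⟨t₀, ht₀⟩
  set tp := Nat.find hex with htpdef
  have hQtp : ¬ Q tp := Nat.find_spec hex
  have hQlt : ∀ t, t < tp → Q t := fun t ht => not_not.mp (Nat.find_min hex ht)
  have htp2 : 2 ≤ tp := by
    by_contra h
    have h01 : tp = 0 ∨ tp = 1 := by omega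
    rcases h01 with h0 | h0 <;> rw [h0] at hQtp
    · exact hQtp hQ0
    · exact hQtp hQ1
  have htpn : tp ≤ n - 1 := le_trans (Nat.find_le ht₀) ht₀n
  have htpn2 : tp ≤ n - 2 := by
    rcases Nat.lt_or_ge tp (n-1) with h | h
    · omega
    · exfalso
      have heq : tp = n - 1 := by omega
      rw [heq] at hQtp; exact hQtp hQn1
  set u := Nat.findGreatest (fun t => ¬ Q t) (n-1) with hudef
  have hQu : ¬ Q u := Nat.findGreatest_spec (P := fun t => ¬ Q t) htpn hQtp
  have htpu : tp ≤ u := Nat.le_findGreatest (P := fun t => ¬ Q t) htpn hQtp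
  have hun : u ≤ n - 1 := Nat.findGreatest_le (n-1)
  have hQgt : ∀ t, u < t → t ≤ n - 1 → Q t := by
    intro t hut htn
    by_contra hq
    exact absurd (Nat.le_findGreatest (P := fun t => ¬ Q t) htn hq) (by omega)
  have hun2 : u ≤ n - 2 := by
    rcases Nat.lt_or_ge u (n-1) with h | h
    · omega
    · exfalso
      have heq : u = n - 1 := by omega
      rw [heq] at hQu; exact hQu hQn1
  -- connectivity: all neighbors of v on the cycle lie in the arc
  have Sarc : ∀ e : ℕ, e < n → Q e → (e < tp ∨ u < e) := by
    intro e₀ he₀n hQe₀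
    obtain ⟨m, p, hr⟩ := hpath v hv ⟨i, h2⟩
    have hmem : ∀ x, x ∈ Set.range ⇑p ↔ (x ∈ Set.range ⇑c ∧ G.Adj v x) :=
      fun x => Set.ext_iff.mp hr x
    set P : Fin m → Prop :=
      fun k => ∃ e, e < n ∧ p k = c (i + (e : Fin n)) ∧ (e < tp ∨ u < e) with hPdef
    have hstep : ∀ a b : Fin m, (pathG m).Adj a b → P a → P b := by
      rintro a b hab ⟨e, hen, hpa, hcond⟩
      obtain ⟨⟨j', hj'⟩, hadjv⟩ := (hmem (p b)).mp ⟨b, rfl⟩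
      have hGadj : G.Adj (c (i + (e : Fin n))) (c j') := by
        rw [hj', ← hpa]; exact p.map_rel_iff.mpr hab
      have hcyc := (my_cyc_adj' hn2 _ _).mp (c.map_rel_iff.mp hGadj)
      rcases hcyc.2 with hc | hc
      · -- j' = i + e + 1
        set e₁ := (e+1) % n with he₁
        have he₁n : e₁ < n := Nat.mod_lt _ hnpos
        have hj'e : j' = i + (e₁ : Fin n) := by
          rw [← hc]
          have hcc : ((e₁ : ℕ) : Fin n) = ((e+1 : ℕ) : Fin n) := by
            rw [my_fin_natCast_eq, he₁, Nat.mod_mod]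
          rw [hcc]; push_cast; ring
        have hQe₁ : Q e₁ := by
          rw [hQadj, ← hj'e, hj']; exact hadjv
        have hcond₁ : e₁ < tp ∨ u < e₁ := by
          by_contra hcnt
          push_neg at hcnt
          rcases hcond with hlt | hgt
          · have hlt1 : e + 1 < n := by omega
            have he1 : e₁ = e + 1 := by rw [he₁, Nat.mod_eq_of_lt hlt1]
            have heqtp : e₁ = tp := by omega
            rw [heqtp] at hQe₁
            exact hQtp hQe₁
          · rcases Nat.lt_or_ge (e+1) n with hlt1 | hge1
            · have he1 : e₁ = e + 1 := by rw [he₁, Nat.mod_eq_of_lt hlt1]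
              omega
            · have hen1 : e + 1 = n := by omega
              have he1 : e₁ = 0 := by rw [he₁, hen1, Nat.mod_self]
              omega
        exact ⟨e₁, he₁n, by rw [← hj', hj'e], hcond₁⟩
      · -- j' + 1 = i + e
        by_cases he0 : e = 0
        · have hj'e : j' = i + ((n-1 : ℕ) : Fin n) := by
            rw [hneg]
            have hc' : j' + 1 = i := by
              rw [hc, he0]; norm_num
            have : j' + 1 + (-1) = i + (-1) := by rw [hc']
            calc j' = j' + 1 + (-1) := by ring
              _ = i + (-1) := this
          have hval : p b = c (i + ((n-1 : ℕ) : Fin n)) := by rw [← hj', hj'e]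
          exact ⟨n-1, by omega, hval, Or.inr (by omega)⟩
        · set e₂ := e - 1 with he₂
          have he₂n : e₂ < n := by omega
          have hj'e : j' = i + (e₂ : Fin n) := by
            have hcc : ((e₂ : ℕ) : Fin n) + 1 = (e : Fin n) := by
              have h' : ((e₂ + 1 : ℕ) : Fin n) = (e : Fin n) := by
                rw [show e₂ + 1 = e by omega]
              push_cast at h'
              exact h'
            have h2' : j' + 1 = (i + (e₂ : Fin n)) + 1 := by
              rw [hc, ← hcc]; ring
            exact add_right_cancel h2'
          have hQe₂ : Q e₂ := by
            rw [hQadj, ← hj'e, hj']; exact hadjv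
          have hcond₂ : e₂ < tp ∨ u < e₂ := by
            by_contra hcnt
            push_neg at hcnt
            rcases hcond with hlt | hgt
            · omega
            · have heq : e₂ = u := by omega
              rw [heq] at hQe₂
              exact hQu hQe₂
          exact ⟨e₂, he₂n, by rw [← hj', hj'e], hcond₂⟩
    obtain ⟨k0, hk0⟩ : c i ∈ Set.range ⇑p := (hmem _).mpr ⟨⟨i, rfl⟩, h2⟩
    obtain ⟨kj, hkj⟩ : c (i + (e₀ : Fin n)) ∈ Set.range ⇑p :=
      (hmem _).mpr ⟨⟨_, rfl⟩, (hQadj e₀).mp hQe₀⟩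
    obtain ⟨w⟩ := my_path_reach k0 kj
    have hP0 : P k0 := ⟨0, hnpos, by rw [hk0]; norm_num, Or.inl (by omega)⟩
    obtain ⟨e, hen, hpe, hcond⟩ := my_walk_trans hstep w hP0
    have hee : e = e₀ :=
      (hcast_inj e e₀ hen he₀n).mp ((hicast e e₀).mp (c.injective (hpe.symm.trans hkj).symm).symm)
    omega
  -- the arc facts in adjacency form
  have hQiff : ∀ e : ℕ, tp - 1 ≤ e → e ≤ u + 1 → (Q e ↔ (e = tp - 1 ∨ e = u + 1)) := by
    intro e hel heu
    constructor
    · intro hQe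
      have := Sarc e (by omega) hQe
      omega
    · rintro (rfl | rfl)
      · exact hQlt _ (by omega)
      · exact hQgt _ (by omega) (by omega)
  have hgadj : ∀ e e' : ℕ, 1 ≤ e → e ≤ n-1 → 1 ≤ e' → e' ≤ n-1 →
      (G.Adj (c (i + (e : Fin n))) (c (i + (e' : Fin n))) ↔ (e + 1 = e' ∨ e' + 1 = e)) := by
    intro e e' h1e h2e h1e' h2e'
    rw [c.map_rel_iff, my_cyc_adj' hn2]
    have hsucc : ∀ a b : ℕ, a ≤ n-1 → b ≤ n-1 → 1 ≤ b →
        ((i + (a : Fin n)) + 1 = i + (b : Fin n) ↔ a + 1 = b) := by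
      intro a b han hbn hb1
      have hrw : (i + (a : Fin n)) + 1 = i + ((a+1 : ℕ) : Fin n) := by push_cast; ring
      rw [hrw, hicast, my_fin_natCast_eq]
      rcases Nat.lt_or_ge (a+1) n with h | h
      · rw [Nat.mod_eq_of_lt h, Nat.mod_eq_of_lt (by omega)]
      · have han1 : a + 1 = n := by omega
        rw [han1, Nat.mod_self, Nat.mod_eq_of_lt (by omega)]
        omega
    constructor
    · rintro ⟨hne, h | h⟩
      · exact Or.inl ((hsucc e e' h2e h2e' h1e').mp h)
      · exact Or.inr ((hsucc e' e h2e' h2e h1e).mp h)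
    · intro h
      have hne : i + (e : Fin n) ≠ i + (e' : Fin n) := by
        rw [Ne, hicast, my_fin_natCast_eq, Nat.mod_eq_of_lt (by omega),
          Nat.mod_eq_of_lt (by omega)]
        omega
      rcases h with h | h
      · exact ⟨hne, Or.inl ((hsucc e e' h2e h2e' h1e').mpr h)⟩
      · exact ⟨hne, Or.inr ((hsucc e' e h2e' h2e h1e).mpr h)⟩
  have hadj_o : ∀ e : ℕ, 1 ≤ e → e ≤ n - 1 → ¬ G.Adj o (c (i + (e : Fin n))) := by
    intro e h1e h2e hadj
    have hii : i + (e : Fin n) = i := (ho2 _).mp hadj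
    have hcc : (e : Fin n) = ((0:ℕ) : Fin n) := by
      apply (hicast e 0).mp
      simpa using hii
    rw [my_fin_natCast_eq, Nat.mod_eq_of_lt (by omega), Nat.mod_eq_of_lt (by omega)] at hcc
    omega
  have hvg : ∀ e : ℕ, v ≠ c (i + (e : Fin n)) := fun e h => hv ⟨_, h.symm⟩
  have hog : ∀ e : ℕ, o ≠ c (i + (e : Fin n)) := fun e h => ho1 ⟨_, h.symm⟩
  have hgg : ∀ e e' : ℕ, e < n → e' < n →
      c (i + (e : Fin n)) = c (i + (e' : Fin n)) → e = e' := by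
    intro e e' he he' h
    exact (hcast_inj e e' he he').mp ((hicast _ _).mp (c.injective h))
  -- build the induced C_{m'}* and contradict hstar
  set m' := u - tp + 4 with hm'def
  have hm'4 : 4 ≤ m' := by omega
  apply hstar m' hm'4
  refine ⟨⟨⟨fun k => Option.elim k o
    (fun k => if k.val = 0 then v else c (i + ((tp - 2 + k.val : ℕ) : Fin n))), ?_⟩, ?_⟩⟩
  · -- injectivity
    rintro (_ | a) (_ | b) hab <;> simp only [Option.elim] at hab
    · rfl
    · exfalso
      by_cases hb : b.val = 0
      · rw [if_pos hb] at hab; exact hov hab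
      · rw [if_neg hb] at hab; exact hog _ hab
    · exfalso
      by_cases ha : a.val = 0
      · rw [if_pos ha] at hab; exact hov hab.symm
      · rw [if_neg ha] at hab; exact hog _ hab.symm
    · by_cases ha : a.val = 0 <;> by_cases hb : b.val = 0
      · rw [if_pos ha, if_pos hb] at hab
        exact congrArg some (Fin.ext (by omega))
      · rw [if_pos ha, if_neg hb] at hab
        exact absurd hab (hvg _)
      · rw [if_neg ha, if_pos hb] at hab
        exact absurd hab.symm (hvg _)
      · rw [if_neg ha, if_neg hb] at hab
        have hvb := b.isLt
        have hva := a.isLt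
        have := hgg _ _ (by omega) (by omega) hab
        exact congrArg some (Fin.ext (by omega))
  · -- adjacency
    intro a b
    rw [my_cycStar_adj]
    match a, b with
    | none, none =>
      simp only [Function.Embedding.coeFn_mk, Option.elim]
      constructor
      · intro h; exact absurd h (G.loopless.irrefl o)
      · rintro ⟨x, y, hx, hy, hxy⟩; exact nomatch hx
    | none, some b =>
      simp only [Function.Embedding.coeFn_mk, Option.elim]
      constructor
      · intro h
        exfalso
        by_cases hb : b.val = 0
        · rw [if_pos hb] at h; exact hvo h.symm
        · rw [if_neg hb] at h
          have := b.isLt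
          exact hadj_o _ (by omega) (by omega) h
      · rintro ⟨x, y, hx, hy, hxy⟩; exact nomatch hx
    | some a, none =>
      simp only [Function.Embedding.coeFn_mk, Option.elim]
      constructor
      · intro h
        exfalso
        by_cases ha : a.val = 0
        · rw [if_pos ha] at h; exact hvo h
        · rw [if_neg ha] at h
          have := a.isLt
          exact hadj_o _ (by omega) (by omega) h.symm
      · rintro ⟨x, y, hx, hy, hxy⟩; exact nomatch hy
    | some a, some b =>
      simp only [Function.Embedding.coeFn_mk, Option.elim]
      have hva := a.isLt
      have hvb := b.isLt
      constructor
      · intro h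
        refine ⟨a, b, rfl, rfl, (my_cyc_adj a b).mpr ⟨?_, ?_⟩⟩
        all_goals by_cases ha : a.val = 0 <;> by_cases hb : b.val = 0
        -- first block: a ≠ b
        · rw [if_pos ha, if_pos hb] at h; exact absurd h (G.loopless.irrefl v)
        · intro hq; rw [hq] at ha; exact hb ha
        · intro hq; rw [hq] at ha; exact ha hb
        · rw [if_neg ha, if_neg hb] at h
          intro hq
          rw [hq] at h
          exact absurd h (G.loopless.irrefl _)
        -- second block: the mod condition
        · rw [if_pos ha, if_pos hb] at h; exact absurd h (G.loopless.irrefl v)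
        · rw [if_pos ha, if_neg hb] at h
          have hQb : Q (tp - 2 + b.val) := (hQadj _).mpr h
          have := (hQiff _ (by omega) (by omega)).mp hQb
          rcases this with h' | h'
          · left; rw [ha, Nat.mod_eq_of_lt (by omega)]; omega
          · right
            rw [show b.val + 1 = m' by omega, Nat.mod_self]
            omega
        · rw [if_neg ha, if_pos hb] at h
          have hQa : Q (tp - 2 + a.val) := (hQadj _).mpr h.symm
          have := (hQiff _ (by omega) (by omega)).mp hQa
          rcases this with h' | h'
          · right; rw [hb, Nat.mod_eq_of_lt (by omega)]; omega
          · left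
            rw [show a.val + 1 = m' by omega, Nat.mod_self]
            omega
        · rw [if_neg ha, if_neg hb] at h
          have := (hgadj _ _ (by omega) (by omega) (by omega) (by omega)).mp h
          rcases this with h' | h'
          · left; rw [Nat.mod_eq_of_lt (by omega)]; omega
          · right; rw [Nat.mod_eq_of_lt (by omega)]; omega
      · rintro ⟨x, y, hx, hy, hxy⟩
        injection hx with hx
        injection hy with hy
        subst hx; subst hy
        obtain ⟨hne, hor⟩ := (my_cyc_adj a b).mp hxy
        by_cases ha : a.val = 0 <;> by_cases hb : b.val = 0
        · exact absurd (Fin.ext (by omega : a.val = b.val)) hne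
        · rw [if_pos ha, if_neg hb]
          have hbval : b.val = 1 ∨ b.val = m' - 1 := by
            rcases hor with h' | h'
            · rw [ha, Nat.mod_eq_of_lt (by omega)] at h'; omega
            · rcases Nat.lt_or_ge (b.val + 1) m' with hlt | hge
              · rw [Nat.mod_eq_of_lt hlt] at h'; omega
              · have hm : b.val + 1 = m' := by omega
                rw [hm, Nat.mod_self] at h'; omega
          have hQb : Q (tp - 2 + b.val) := by
            apply (hQiff _ (by omega) (by omega)).mpr
            omega
          exact (hQadj _).mp hQb
        · rw [if_neg ha, if_pos hb]
          have haval : a.val = 1 ∨ a.val = m' - 1 := by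
            rcases hor with h' | h'
            · rcases Nat.lt_or_ge (a.val + 1) m' with hlt | hge
              · rw [Nat.mod_eq_of_lt hlt] at h'; omega
              · have hm : a.val + 1 = m' := by omega
                rw [hm, Nat.mod_self] at h'; omega
            · rw [hb, Nat.mod_eq_of_lt (by omega)] at h'; omega
          have hQa : Q (tp - 2 + a.val) := by
            apply (hQiff _ (by omega) (by omega)).mpr
            omega
          exact ((hQadj _).mp hQa).symm
        · rw [if_neg ha, if_neg hb]
          apply (hgadj _ _ (by omega) (by omega) (by omega) (by omega)).mpr
          rcases hor with h' | h'
          · rcases Nat.lt_or_ge (a.val + 1) m' with hlt | hge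
            · rw [Nat.mod_eq_of_lt hlt] at h'; omega
            · have hm : a.val + 1 = m' := by omega
              rw [hm, Nat.mod_self] at h'; omega
          · rcases Nat.lt_or_ge (b.val + 1) m' with hlt | hge
            · rw [Nat.mod_eq_of_lt hlt] at h'; omega
            · have hm : b.val + 1 = m' := by omega
              rw [hm, Nat.mod_self] at h'; omega
end

section
/- Let G be a graph, C = v_1...v_n v_1 (n ≥ 4) a chordless cycle of G, and suppose G contains no induced C_k* for any k ≥ 4 and the neighbors on C of every vertex outside C induce a chordless path (nonempty). Define, for each i (mod n): O_i = vertices v off C with N(v) ∩ V(C) = {v_i}; A_i = vertices off C adjacent to v_{i-1} and v_i having a neighbor w adjacent to v_i but not v_{i-1}; B_i = vertices off C adjacent to v_i and v_{i+1} having a neighbor w adjacent to v_i but not v_{i+1}; T_i = vertices v off C with N(v) ∩ V(C) = {v_i, v_{i+1}} and v ∉ B_i ∪ A_{i+1}. Then V(G) \ V(C) is the union over i of A_i ∪ B_i ∪ O_i ∪ T_i. -/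
open SimpleGraph

lemma succMod {n x : ℕ} (hx : x < n) :
    ((x + 1) % n = x + 1 ∧ x + 1 < n) ∨ ((x + 1) % n = 0 ∧ x + 1 = n) := by
  rcases Nat.lt_or_ge (x + 1) n with h | h
  · exact Or.inl ⟨Nat.mod_eq_of_lt h, h⟩
  · have : x + 1 = n := by omega
    exact Or.inr ⟨by rw [this, Nat.mod_self], this⟩

lemma cycAdj {n : ℕ} [NeZero n] (hn : 2 ≤ n) {a b : Fin n} :
    (cycG n).Adj a b ↔ b = a + 1 ∨ a = b + 1 := by
  have ha := a.isLt; have hb := b.isLt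
  have h1 := succMod ha; have h2 := succMod hb
  have e1 : 1 % n = 1 := Nat.mod_eq_of_lt (by omega)
  simp only [cycG, SimpleGraph.fromRel_adj, Fin.ext_iff, Fin.add_def, Fin.val_one', e1, ne_eq]
  omega

lemma pathAdj {m : ℕ} {a b : Fin m} :
    (pathG m).Adj a b ↔ a.val + 1 = b.val ∨ b.val + 1 = a.val := by
  have ha := a.isLt; have hb := b.isLt
  simp only [pathG, SimpleGraph.fromRel_adj, Fin.ext_iff, ne_eq]
  omega

/-- Claim 1 of the paper: with no induced `C_k^*` (`k ≥ 4`) and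
neighbors on `C` of every vertex off `C` inducing a nonempty chordless path, every
vertex off `C` lies in some `A_i ∪ B_i ∪ O_i ∪ T_i`. -/
theorem stmt14 {V : Type*} [Finite V] (G : SimpleGraph V)
    (hstar : ∀ k, 4 ≤ k → ¬ HasInduced (cycStar k) G)
    {n : ℕ} [NeZero n] (hn : 4 ≤ n) (c : cycG n ↪g G)
    (hpath : ∀ u ∉ Set.range ⇑c, ∃ m, 1 ≤ m ∧ ∃ p : pathG m ↪g G,
      Set.range ⇑p = {x | x ∈ Set.range ⇑c ∧ G.Adj u x}) :
    ∀ v ∉ Set.range ⇑c, ∃ i : Fin n,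
      v ∈ Aset G ⇑c i ∪ Bset G ⇑c i ∪ Oset G ⇑c i ∪ Tset G ⇑c i := by
  intro v hv
  obtain ⟨m, hm1, p, hp⟩ := hpath v hv
  have hmem : ∀ x, x ∈ Set.range ⇑p ↔ x ∈ Set.range ⇑c ∧ G.Adj v x := fun x => by
    rw [hp]; rfl
  have hn2 : 2 ≤ n := by omega
  match m, hm1, p, hmem with
  | 1, _, p, hmem =>
    -- O case
    obtain ⟨⟨i, hci⟩, hadj⟩ := (hmem (p 0)).1 ⟨0, rfl⟩
    refine ⟨i, Or.inl (Or.inr ⟨hv, fun j => ⟨fun h => ?_, fun h => ?_⟩⟩)⟩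
    · obtain ⟨x, hx⟩ := (hmem (c j)).2 ⟨⟨j, rfl⟩, h⟩
      have : x = 0 := Subsingleton.elim x 0
      subst this
      exact c.injective (hci.trans hx).symm
    · subst h; rw [hci]; exact hadj
  | 2, _, p, hmem =>
    obtain ⟨⟨a, hca⟩, hadj0⟩ := (hmem (p 0)).1 ⟨0, rfl⟩
    obtain ⟨⟨b, hcb⟩, hadj1⟩ := (hmem (p 1)).1 ⟨1, rfl⟩
    have hadj01 : G.Adj (p 0) (p 1) := p.map_adj_iff.2 (by
      rw [pathAdj]; left; rfl)
    have hcyc : (cycG n).Adj a b := c.map_adj_iff.1 (by rw [hca, hcb]; exact hadj01)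
    have key : ∃ i : Fin n, ∀ j, G.Adj v (c j) ↔ (j = i ∨ j = i + 1) := by
      rcases (cycAdj hn2).1 hcyc with hb | ha
      · refine ⟨a, fun j => ⟨fun h => ?_, fun h => ?_⟩⟩
        · obtain ⟨x, hx⟩ := (hmem (c j)).2 ⟨⟨j, rfl⟩, h⟩
          fin_cases x
          · exact Or.inl (c.injective (hca.trans hx).symm)
          · exact Or.inr (hb ▸ c.injective (hcb.trans hx).symm)
        · rcases h with h | h
          · subst h; rw [hca]; exact hadj0
          · subst h; rw [← hb, hcb]; exact hadj1
      · refine ⟨b, fun j => ⟨fun h => ?_, fun h => ?_⟩⟩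
        · obtain ⟨x, hx⟩ := (hmem (c j)).2 ⟨⟨j, rfl⟩, h⟩
          fin_cases x
          · exact Or.inr (ha ▸ c.injective (hca.trans hx).symm)
          · exact Or.inl (c.injective (hcb.trans hx).symm)
        · rcases h with h | h
          · subst h; rw [hcb]; exact hadj1
          · subst h; rw [← ha, hca]; exact hadj0
    obtain ⟨i, hchar⟩ := key
    by_cases hB : v ∈ Bset G ⇑c i
    · exact ⟨i, Or.inl (Or.inl (Or.inr hB))⟩
    by_cases hA : v ∈ Aset G ⇑c (i + 1)
    · exact ⟨i + 1, Or.inl (Or.inl (Or.inl hA))⟩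
    exact ⟨i, Or.inr ⟨hv, hchar, fun h => h.elim hB hA⟩⟩
  | (k + 3), _, p, hmem =>
    have h01 : G.Adj (p ⟨0, by omega⟩) (p ⟨1, by omega⟩) := p.map_adj_iff.2 (by
      rw [pathAdj]; left; rfl)
    have h12 : G.Adj (p ⟨1, by omega⟩) (p ⟨2, by omega⟩) := p.map_adj_iff.2 (by
      rw [pathAdj]; left; rfl)
    have h02 : ¬ G.Adj (p ⟨0, by omega⟩) (p ⟨2, by omega⟩) := fun h => by
      have := p.map_adj_iff.1 h
      rw [pathAdj] at this
      simp at this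
    obtain ⟨⟨a, hca⟩, hadj0⟩ := (hmem (p ⟨0, by omega⟩)).1 ⟨_, rfl⟩
    obtain ⟨⟨b, hcb⟩, hadj1⟩ := (hmem (p ⟨1, by omega⟩)).1 ⟨_, rfl⟩
    obtain ⟨⟨d, hcd⟩, hadj2⟩ := (hmem (p ⟨2, by omega⟩)).1 ⟨_, rfl⟩
    have hne : a ≠ d := fun h => by
      have : p ⟨0, by omega⟩ = p ⟨2, by omega⟩ := by rw [← hca, ← hcd, h]
      have := p.injective this
      simp [Fin.ext_iff] at this
    have hnadjad : ¬ G.Adj (c a) (c d) := by rw [hca, hcd]; exact h02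
    have hcycab : (cycG n).Adj a b := c.map_adj_iff.1 (by rw [hca, hcb]; exact h01)
    have hcycbd : (cycG n).Adj b d := c.map_adj_iff.1 (by rw [hcb, hcd]; exact h12)
    rcases (cycAdj hn2).1 hcycab with hb | ha <;> rcases (cycAdj hn2).1 hcycbd with hd | hb2
    · -- b = a + 1, d = b + 1 : v ∈ A_b with w = c d
      have hba : b - 1 = a := by rw [hb]; exact add_sub_cancel_right a 1
      refine ⟨b, Or.inl (Or.inl (Or.inl ⟨hv, ?_, ?_, c d, ?_, ?_, ?_⟩))⟩
      · rw [hba, hca]; exact hadj0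
      · rw [hcb]; exact hadj1
      · rw [hcd]; exact hadj2
      · rw [hcd, hcb]; exact h12.symm
      · rw [hba]; exact fun h => hnadjad h.symm
    · -- b = a + 1, b = d + 1 : a = d, contradiction
      exact absurd (add_right_cancel (hb.symm.trans hb2)) hne
    · -- a = b + 1, d = b + 1 : a = d, contradiction
      exact absurd (ha.trans hd.symm) hne
    · -- a = b + 1, b = d + 1 : v ∈ A_b with w = c a
      have hbd : b - 1 = d := by rw [hb2]; exact add_sub_cancel_right d 1
      refine ⟨b, Or.inl (Or.inl (Or.inl ⟨hv, ?_, ?_, c a, ?_, ?_, ?_⟩))⟩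
      · rw [hbd, hcd]; exact hadj2
      · rw [hcb]; exact hadj1
      · rw [hca]; exact hadj0
      · rw [hca, hcb]; exact h01
      · rw [hbd]; exact hnadjad
end

section
/- Let A and B be cliques of an interval graph G such that G has an interval model where all intervals of vertices in A share the same left endpoint which is leftmost among all endpoints, and all intervals of vertices in B share the same right endpoint which is rightmost. Then: (a) every vertex of A ∪ B is an end vertex of G; (b) no two vertices both in A (or both in B) are the two internal vertices of an induced P_4 of G; and (c) for every a ∈ A and b ∈ B, there is no induced a,b-path in G together with a vertex adjacent to no vertex of the path. -/
open SimpleGraph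

/-- A vertex `v` is an end vertex of an interval graph: some interval model puts the
left endpoint of `v`'s interval leftmost among all endpoints. -/
def IsEndVertex {V : Type*} (G : SimpleGraph V) (v : V) : Prop :=
  ∃ M : V → ℝ × ℝ, IsIntervalModel G M ∧
    ∀ u, (M v).1 ≤ (M u).1 ∧ (M v).1 ≤ (M u).2

lemma model_adj {V : Type*} {G : SimpleGraph V} {M : V → ℝ × ℝ}
    (hM : IsIntervalModel G M) {u v : V} (huv : u ≠ v) :
    G.Adj u v ↔ (M u).1 ≤ (M v).2 ∧ (M v).1 ≤ (M u).2 := by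
  rw [hM.2 u v huv, Set.Icc_inter_Icc, Set.nonempty_Icc, max_le_iff, le_min_iff, le_min_iff]
  have h1 := hM.1 u; have h2 := hM.1 v
  constructor
  · rintro ⟨⟨_, h⟩, h', _⟩; exact ⟨h, h'⟩
  · rintro ⟨h, h'⟩; exact ⟨⟨h1, h⟩, h', h2⟩

lemma model_of_adj {V : Type*} (G : SimpleGraph V) (M : V → ℝ × ℝ)
    (h1 : ∀ v, (M v).1 ≤ (M v).2)
    (h2 : ∀ u v : V, u ≠ v → (G.Adj u v ↔ (M u).1 ≤ (M v).2 ∧ (M v).1 ≤ (M u).2)) :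
    IsIntervalModel G M := by
  refine ⟨h1, fun u v huv => ?_⟩
  rw [h2 u v huv, Set.Icc_inter_Icc, Set.nonempty_Icc, max_le_iff, le_min_iff, le_min_iff]
  have g1 := h1 u; have g2 := h1 v
  constructor
  · rintro ⟨h, h'⟩; exact ⟨⟨g1, h⟩, h', g2⟩
  · rintro ⟨⟨_, h⟩, h', _⟩; exact ⟨h, h'⟩

lemma pathG_adj {m : ℕ} {i j : Fin m} (h : i.val + 1 = j.val) : (pathG m).Adj i j := by
  refine ⟨fun hij => by subst hij; omega, Or.inl h⟩

/-- necessity in the characterization of left-right pairs: if the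
cliques `A`, `B` of an interval graph `G` admit an interval model in which all
intervals of `A` share a common, leftmost left endpoint and all intervals of `B`
share a common, rightmost right endpoint, then (a) every vertex of `A ∪ B` is an end
vertex, (b) no two vertices both in `A` (or both in `B`) are the internal vertices of
an induced `P_4`, and (c) for `a ∈ A`, `b ∈ B` there is no induced `a,b`-path
together with a vertex adjacent to no vertex of the path. -/
theorem stmt16 {V : Type*} [Finite V] (G : SimpleGraph V) (M : V → ℝ × ℝ)
    (hM : IsIntervalModel G M) (A B : Set V)
    (hA : G.IsClique A) (hB : G.IsClique B)
    (hAeq : ∀ a ∈ A, ∀ a' ∈ A, (M a).1 = (M a').1)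
    (hAmin : ∀ a ∈ A, ∀ u, (M a).1 ≤ (M u).1)
    (hBeq : ∀ b ∈ B, ∀ b' ∈ B, (M b).2 = (M b').2)
    (hBmax : ∀ b ∈ B, ∀ u, (M u).2 ≤ (M b).2) :
    (∀ v ∈ A ∪ B, IsEndVertex G v) ∧
    (¬ ∃ f : pathG 4 ↪g G,
        (f 1 ∈ A ∧ f 2 ∈ A) ∨ (f 1 ∈ B ∧ f 2 ∈ B)) ∧
    (∀ a ∈ A, ∀ b ∈ B,
      ¬ ∃ m : ℕ, ∃ hm : 1 ≤ m, ∃ p : pathG m ↪g G,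
        p ⟨0, by omega⟩ = a ∧ p ⟨m - 1, by omega⟩ = b ∧
        ∃ z, z ∉ Set.range ⇑p ∧ ∀ j, ¬ G.Adj z (p j)) := by
  have hle := hM.1
  constructor
  · rintro v (hv | hv)
    · exact ⟨M, hM, fun u => ⟨hAmin v hv u, le_trans (hAmin v hv u) (hle u)⟩⟩
    · refine ⟨fun u => (-(M u).2, -(M u).1), ?_, ?_⟩
      · refine model_of_adj G _ (fun w => by simpa using hle w) (fun u w huw => ?_)
        rw [model_adj hM huw]
        constructor <;> (rintro ⟨h, h'⟩; constructor <;> simp_all)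
      · intro u
        constructor
        · simpa using hBmax v hv u
        · simp only
          have := hle u
          have := hBmax v hv u
          linarith
  constructor
  · rintro ⟨f, hf⟩
    have hinj := f.injective
    have a01 : G.Adj (f 0) (f 1) := f.map_rel_iff.2 (pathG_adj (by decide))
    have a12 : G.Adj (f 1) (f 2) := f.map_rel_iff.2 (pathG_adj (by decide))
    have a23 : G.Adj (f 2) (f 3) := f.map_rel_iff.2 (pathG_adj (by decide))
    have n02 : ¬ G.Adj (f 0) (f 2) := fun h => by
      have := f.map_rel_iff.1 h
      rw [pathG, SimpleGraph.fromRel_adj] at this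
      revert this; decide
    have n13 : ¬ G.Adj (f 1) (f 3) := fun h => by
      have := f.map_rel_iff.1 h
      rw [pathG, SimpleGraph.fromRel_adj] at this
      revert this; decide
    have d02 : f 0 ≠ f 2 := fun h => by have := hinj h; revert this; decide
    have d13 : f 1 ≠ f 3 := fun h => by have := hinj h; revert this; decide
    rw [model_adj hM (G.ne_of_adj a01)] at a01
    rw [model_adj hM (G.ne_of_adj a12)] at a12
    rw [model_adj hM (G.ne_of_adj a23)] at a23
    rw [model_adj hM d02] at n02
    rw [model_adj hM d13] at n13
    push_neg at n02 n13
    rcases hf with ⟨h1, h2⟩ | ⟨h1, h2⟩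
    · have e12 : (M (f 1)).1 = (M (f 2)).1 := hAeq _ h1 _ h2
      have m0 : (M (f 1)).1 ≤ (M (f 0)).1 := hAmin _ h1 _
      have m3 : (M (f 2)).1 ≤ (M (f 3)).1 := hAmin _ h2 _
      have c0 : (M (f 2)).2 < (M (f 0)).1 := by
        by_contra hc; push_neg at hc
        have := n02 hc
        have := hle (f 0)
        linarith
      have c3 : (M (f 1)).2 < (M (f 3)).1 := by
        by_contra hc; push_neg at hc
        have := n13 (by linarith [a01.2])
        have := hle (f 3)
        linarith
      linarith [a01.1, a23.2, hle (f 3)]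
    · have e12 : (M (f 1)).2 = (M (f 2)).2 := hBeq _ h1 _ h2
      have m0 : (M (f 0)).2 ≤ (M (f 1)).2 := hBmax _ h1 _
      have m3 : (M (f 3)).2 ≤ (M (f 2)).2 := hBmax _ h2 _
      have c0 : (M (f 0)).2 < (M (f 2)).1 := by
        by_contra hc; push_neg at hc
        have := n02 (by linarith [hle (f 0)])
        linarith
      have c3 : (M (f 3)).2 < (M (f 1)).1 := by
        by_contra hc; push_neg at hc
        have := n13 (by linarith [hle (f 3)])
        linarith
      linarith [a01.2, a23.1, hle (f 0)]
  · rintro a ha b hb ⟨m, hm, p, hp0, hpm, z, hz, hzadj⟩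
    set x := (M z).1 with hx
    have hne : ∀ j : Fin m, z ≠ p j := fun j h => hz ⟨j, h.symm⟩
    have hnot : ∀ j : Fin m, ¬ ((M (p j)).1 ≤ x ∧ x ≤ (M (p j)).2) := by
      intro j ⟨h1, h2⟩
      exact hzadj j ((model_adj hM (hne j)).2 ⟨h2, le_trans h1 (hle z)⟩)
    have key : ∀ j, ∀ h : j < m, (M (p ⟨j, h⟩)).2 < x := by
      intro j
      induction j with
      | zero =>
        intro h
        have hl : (M (p ⟨0, h⟩)).1 ≤ x := by rw [hp0]; exact hAmin a ha z
        by_contra hc; push_neg at hc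
        exact hnot _ ⟨hl, hc⟩
      | succ n ih =>
        intro h
        have hn : n < m := by omega
        have hadj : G.Adj (p ⟨n, hn⟩) (p ⟨n + 1, h⟩) :=
          p.map_rel_iff.2 (pathG_adj rfl)
        have := (model_adj hM (G.ne_of_adj hadj)).1 hadj
        have hl : (M (p ⟨n + 1, h⟩)).1 ≤ x := le_trans this.2 (le_of_lt (ih hn))
        by_contra hc; push_neg at hc
        exact hnot _ ⟨hl, hc⟩
    have hmm : m - 1 < m := by omega
    have := key (m - 1) hmm
    rw [hpm] at this
    have := hBmax b hb z
    have := hle z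
    linarith
end

section
/- Let G be a graph with no induced net, 4-wheel, 5-wheel, tent, 4-tent, k-net for k ≥ 2, C_4*, and G_1, let C = v_1...v_n v_1 (n ≥ 4) be a chordless cycle, and define A_i, O_i, B_i with respect to C as in the paper. Then there do not exist two vertices u, v ∈ A_i that are the two internal vertices of an induced P_4 of G[A_i ∪ O_i ∪ B_i]. -/
open SimpleGraph

private theorem fin_one_ne_zero {n : ℕ} [NeZero n] (hn : 4 ≤ n) : (1 : Fin n) ≠ 0 := by
  have h1 : ((1:Fin n)).val = 1 % n := Fin.val_one' n
  have h0 : ((0:Fin n)).val = 0 := Fin.val_zero n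
  have e : 1 % n = 1 := Nat.mod_eq_of_lt (by omega)
  intro h; rw [Fin.ext_iff, h1, h0, e] at h; omega

private theorem fin_two_ne_zero {n : ℕ} [NeZero n] (hn : 4 ≤ n) : (1 : Fin n) + 1 ≠ 0 := by
  have h1 : ((1:Fin n)).val = 1 % n := Fin.val_one' n
  have h0 : ((0:Fin n)).val = 0 := Fin.val_zero n
  have e : 1 % n = 1 := Nat.mod_eq_of_lt (by omega)
  have e2 : (1+1) % n = 2 := by rw [Nat.mod_eq_of_lt (by omega)]
  intro h; rw [Fin.ext_iff, Fin.val_add, h1, h0, e, e2] at h; omega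

private theorem fin_three_ne_zero {n : ℕ} [NeZero n] (hn : 4 ≤ n) : (1 : Fin n) + (1 + 1) ≠ 0 := by
  have h1 : ((1:Fin n)).val = 1 % n := Fin.val_one' n
  have h0 : ((0:Fin n)).val = 0 := Fin.val_zero n
  have e : 1 % n = 1 := Nat.mod_eq_of_lt (by omega)
  have e2 : (1+1) % n = 2 := by rw [Nat.mod_eq_of_lt (by omega)]
  intro h
  rw [Fin.ext_iff, Fin.val_add, Fin.val_add, h1, h0, e, e2] at h
  rw [Nat.mod_eq_of_lt (by omega)] at h
  omega

private theorem fin_succ_val {n : ℕ} [NeZero n] (hn : 4 ≤ n) (x : Fin n) :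
    ((x.val + 1) % n) = (x + 1).val := by
  have h1 : ((1:Fin n)).val = 1 % n := Fin.val_one' n
  have e : 1 % n = 1 := Nat.mod_eq_of_lt (by omega)
  rw [Fin.val_add, h1, e]

instance : DecidableRel (pathG 4).Adj := fun a b =>
  decidable_of_iff _ (SimpleGraph.fromRel_adj _ a b).symm

instance : DecidableRel (kTent 4).Adj := fun a b =>
  decidable_of_iff _ (SimpleGraph.fromRel_adj _ a b).symm

instance : DecidableRel (cycG 4).Adj := fun a b =>
  decidable_of_iff _ (SimpleGraph.fromRel_adj _ a b).symm

instance : DecidableRel (cycStar 4).Adj := fun a b =>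
  decidable_of_iff _
    (SimpleGraph.fromRel_adj
      (fun u v => ∃ x y, u = some x ∧ v = some y ∧ (cycG 4).Adj x y) a b).symm

instance : DecidableRel netG.Adj := fun a b =>
  decidable_of_iff (s(a,b) ∈ ({s(0,1), s(1,2), s(2,0), s(3,0), s(4,1), s(5,2)} :
      Finset (Sym2 (Fin 6))) ∧ a ≠ b)
    (by rw [netG, SimpleGraph.fromEdgeSet_adj]; simp)

instance : DecidableRel tentG.Adj := fun a b =>
  decidable_of_iff (s(a,b) ∈ ({s(0,1), s(1,2), s(2,0), s(3,0), s(3,1), s(4,1), s(4,2), s(5,2),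
      s(5,0)} : Finset (Sym2 (Fin 6))) ∧ a ≠ b)
    (by rw [tentG, SimpleGraph.fromEdgeSet_adj]; simp)

instance : DecidableRel G1.Adj := fun a b =>
  decidable_of_iff (s(a,b) ∈ ({s(0,1), s(1,2), s(3,0), s(3,1), s(3,2), s(4,0), s(4,1), s(4,2)} :
      Finset (Sym2 (Fin 5))) ∧ a ≠ b)
    (by rw [G1, SimpleGraph.fromEdgeSet_adj]; simp)

set_option maxHeartbeats 4000000 in
private theorem p4aux {V : Type*} (G : SimpleGraph V)
    (hnet : ¬ HasInduced netG G) (htent : ¬ HasInduced tentG G)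
    (h4tent : ¬ HasInduced (kTent 4) G) (hstar4 : ¬ HasInduced (cycStar 4) G)
    (hG1 : ¬ HasInduced G1 G)
    (p a b q vm v0 vmm : V)
    (dpa : p ≠ a) (dpb : p ≠ b) (dpq : p ≠ q) (dpvm : p ≠ vm)
    (dpv0 : p ≠ v0) (dpvmm : p ≠ vmm) (dab : a ≠ b) (daq : a ≠ q)
    (davm : a ≠ vm) (dav0 : a ≠ v0) (davmm : a ≠ vmm) (dbq : b ≠ q)
    (dbvm : b ≠ vm) (dbv0 : b ≠ v0) (dbvmm : b ≠ vmm) (dqvm : q ≠ vm)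
    (dqv0 : q ≠ v0) (dqvmm : q ≠ vmm) (dvmv0 : vm ≠ v0) (dvmvmm : vm ≠ vmm)
    (dv0vmm : v0 ≠ vmm)
    (epa : G.Adj p a) (eab : G.Adj a b) (ebq : G.Adj b q)
    (epv0 : G.Adj p v0) (eqv0 : G.Adj q v0)
    (eavm : G.Adj a vm) (eav0 : G.Adj a v0) (ebvm : G.Adj b vm) (ebv0 : G.Adj b v0)
    (evmv0 : G.Adj vm v0) (evmvmm : G.Adj vm vmm)
    (npb : ¬ G.Adj p b) (npq : ¬ G.Adj p q) (naq : ¬ G.Adj a q)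
    (npvm : ¬ G.Adj p vm) (npvmm : ¬ G.Adj p vmm) (nqvm : ¬ G.Adj q vm)
    (nv0vmm : ¬ G.Adj v0 vmm) : False := by
  by_cases hq2 : G.Adj q vmm
  · by_cases hb2 : G.Adj b vmm
    · refine hG1 ⟨⟨⟨![q, b, vm, v0, vmm], ?_⟩, ?_⟩⟩
      · intro x y h
        fin_cases x <;> fin_cases y
        · rfl
        · exact absurd h (dbq.symm)
        · exact absurd h (dqvm)
        · exact absurd h (dqv0)
        · exact absurd h (dqvmm)
        · exact absurd h (dbq)
        · rfl
        · exact absurd h (dbvm)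
        · exact absurd h (dbv0)
        · exact absurd h (dbvmm)
        · exact absurd h (dqvm.symm)
        · exact absurd h (dbvm.symm)
        · rfl
        · exact absurd h (dvmv0)
        · exact absurd h (dvmvmm)
        · exact absurd h (dqv0.symm)
        · exact absurd h (dbv0.symm)
        · exact absurd h (dvmv0.symm)
        · rfl
        · exact absurd h (dv0vmm)
        · exact absurd h (dqvmm.symm)
        · exact absurd h (dbvmm.symm)
        · exact absurd h (dvmvmm.symm)
        · exact absurd h (dv0vmm.symm)
        · rfl
      · intro x y
        fin_cases x <;> fin_cases y
        · exact iff_of_false (G.loopless.irrefl _) (by decide)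
        · exact iff_of_true (ebq.symm) (by decide)
        · exact iff_of_false (nqvm) (by decide)
        · exact iff_of_true (eqv0) (by decide)
        · exact iff_of_true (hq2) (by decide)
        · exact iff_of_true (ebq) (by decide)
        · exact iff_of_false (G.loopless.irrefl _) (by decide)
        · exact iff_of_true (ebvm) (by decide)
        · exact iff_of_true (ebv0) (by decide)
        · exact iff_of_true (hb2) (by decide)
        · exact iff_of_false ((fun h => nqvm h.symm)) (by decide)
        · exact iff_of_true (ebvm.symm) (by decide)
        · exact iff_of_false (G.loopless.irrefl _) (by decide)
        · exact iff_of_true (evmv0) (by decide)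
        · exact iff_of_true (evmvmm) (by decide)
        · exact iff_of_true (eqv0.symm) (by decide)
        · exact iff_of_true (ebv0.symm) (by decide)
        · exact iff_of_true (evmv0.symm) (by decide)
        · exact iff_of_false (G.loopless.irrefl _) (by decide)
        · exact iff_of_false (nv0vmm) (by decide)
        · exact iff_of_true (hq2.symm) (by decide)
        · exact iff_of_true (hb2.symm) (by decide)
        · exact iff_of_true (evmvmm.symm) (by decide)
        · exact iff_of_false ((fun h => nv0vmm h.symm)) (by decide)
        · exact iff_of_false (G.loopless.irrefl _) (by decide)
    · refine hstar4 ⟨⟨⟨(fun o => Option.elim o p ![b, q, vmm, vm]), ?_⟩, ?_⟩⟩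
      · intro x y h
        rcases x with _ | x <;> rcases y with _ | y
        · rfl
        · fin_cases y
          · exact absurd h (dpb)
          · exact absurd h (dpq)
          · exact absurd h (dpvmm)
          · exact absurd h (dpvm)
        · fin_cases x
          · exact absurd h (dpb.symm)
          · exact absurd h (dpq.symm)
          · exact absurd h (dpvmm.symm)
          · exact absurd h (dpvm.symm)
        · fin_cases x <;> fin_cases y
          · rfl
          · exact absurd h (dbq)
          · exact absurd h (dbvmm)
          · exact absurd h (dbvm)
          · exact absurd h (dbq.symm)
          · rfl
          · exact absurd h (dqvmm)
          · exact absurd h (dqvm)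
          · exact absurd h (dbvmm.symm)
          · exact absurd h (dqvmm.symm)
          · rfl
          · exact absurd h (dvmvmm.symm)
          · exact absurd h (dbvm.symm)
          · exact absurd h (dqvm.symm)
          · exact absurd h (dvmvmm)
          · rfl
      · intro x y
        rcases x with _ | x <;> rcases y with _ | y
        · exact iff_of_false (G.loopless.irrefl _) (by decide)
        · fin_cases y
          · exact iff_of_false (npb) (by decide)
          · exact iff_of_false (npq) (by decide)
          · exact iff_of_false (npvmm) (by decide)
          · exact iff_of_false (npvm) (by decide)
        · fin_cases x
          · exact iff_of_false ((fun h => npb h.symm)) (by decide)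
          · exact iff_of_false ((fun h => npq h.symm)) (by decide)
          · exact iff_of_false ((fun h => npvmm h.symm)) (by decide)
          · exact iff_of_false ((fun h => npvm h.symm)) (by decide)
        · fin_cases x <;> fin_cases y
          · exact iff_of_false (G.loopless.irrefl _) (by decide)
          · exact iff_of_true (ebq) (by decide)
          · exact iff_of_false (hb2) (by decide)
          · exact iff_of_true (ebvm) (by decide)
          · exact iff_of_true (ebq.symm) (by decide)
          · exact iff_of_false (G.loopless.irrefl _) (by decide)
          · exact iff_of_true (hq2) (by decide)
          · exact iff_of_false (nqvm) (by decide)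
          · exact iff_of_false ((fun h => hb2 h.symm)) (by decide)
          · exact iff_of_true (hq2.symm) (by decide)
          · exact iff_of_false (G.loopless.irrefl _) (by decide)
          · exact iff_of_true (evmvmm.symm) (by decide)
          · exact iff_of_true (ebvm.symm) (by decide)
          · exact iff_of_false ((fun h => nqvm h.symm)) (by decide)
          · exact iff_of_true (evmvmm) (by decide)
          · exact iff_of_false (G.loopless.irrefl _) (by decide)
  · by_cases ha2 : G.Adj a vmm
    · by_cases hb2 : G.Adj b vmm
      · refine htent ⟨⟨⟨![a, b, v0, vmm, q, p], ?_⟩, ?_⟩⟩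
        · intro x y h
          fin_cases x <;> fin_cases y
          · rfl
          · exact absurd h (dab)
          · exact absurd h (dav0)
          · exact absurd h (davmm)
          · exact absurd h (daq)
          · exact absurd h (dpa.symm)
          · exact absurd h (dab.symm)
          · rfl
          · exact absurd h (dbv0)
          · exact absurd h (dbvmm)
          · exact absurd h (dbq)
          · exact absurd h (dpb.symm)
          · exact absurd h (dav0.symm)
          · exact absurd h (dbv0.symm)
          · rfl
          · exact absurd h (dv0vmm)
          · exact absurd h (dqv0.symm)
          · exact absurd h (dpv0.symm)
          · exact absurd h (davmm.symm)
          · exact absurd h (dbvmm.symm)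
          · exact absurd h (dv0vmm.symm)
          · rfl
          · exact absurd h (dqvmm.symm)
          · exact absurd h (dpvmm.symm)
          · exact absurd h (daq.symm)
          · exact absurd h (dbq.symm)
          · exact absurd h (dqv0)
          · exact absurd h (dqvmm)
          · rfl
          · exact absurd h (dpq.symm)
          · exact absurd h (dpa)
          · exact absurd h (dpb)
          · exact absurd h (dpv0)
          · exact absurd h (dpvmm)
          · exact absurd h (dpq)
          · rfl
        · intro x y
          fin_cases x <;> fin_cases y
          · exact iff_of_false (G.loopless.irrefl _) (by decide)
          · exact iff_of_true (eab) (by decide)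
          · exact iff_of_true (eav0) (by decide)
          · exact iff_of_true (ha2) (by decide)
          · exact iff_of_false (naq) (by decide)
          · exact iff_of_true (epa.symm) (by decide)
          · exact iff_of_true (eab.symm) (by decide)
          · exact iff_of_false (G.loopless.irrefl _) (by decide)
          · exact iff_of_true (ebv0) (by decide)
          · exact iff_of_true (hb2) (by decide)
          · exact iff_of_true (ebq) (by decide)
          · exact iff_of_false ((fun h => npb h.symm)) (by decide)
          · exact iff_of_true (eav0.symm) (by decide)
          · exact iff_of_true (ebv0.symm) (by decide)
          · exact iff_of_false (G.loopless.irrefl _) (by decide)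
          · exact iff_of_false (nv0vmm) (by decide)
          · exact iff_of_true (eqv0.symm) (by decide)
          · exact iff_of_true (epv0.symm) (by decide)
          · exact iff_of_true (ha2.symm) (by decide)
          · exact iff_of_true (hb2.symm) (by decide)
          · exact iff_of_false ((fun h => nv0vmm h.symm)) (by decide)
          · exact iff_of_false (G.loopless.irrefl _) (by decide)
          · exact iff_of_false ((fun h => hq2 h.symm)) (by decide)
          · exact iff_of_false ((fun h => npvmm h.symm)) (by decide)
          · exact iff_of_false ((fun h => naq h.symm)) (by decide)
          · exact iff_of_true (ebq.symm) (by decide)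
          · exact iff_of_true (eqv0) (by decide)
          · exact iff_of_false (hq2) (by decide)
          · exact iff_of_false (G.loopless.irrefl _) (by decide)
          · exact iff_of_false ((fun h => npq h.symm)) (by decide)
          · exact iff_of_true (epa) (by decide)
          · exact iff_of_false (npb) (by decide)
          · exact iff_of_true (epv0) (by decide)
          · exact iff_of_false (npvmm) (by decide)
          · exact iff_of_false (npq) (by decide)
          · exact iff_of_false (G.loopless.irrefl _) (by decide)
      · refine h4tent ⟨⟨⟨![b, q, vm, a, p, vmm, v0], ?_⟩, ?_⟩⟩
        · intro x y h
          fin_cases x <;> fin_cases y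
          · rfl
          · exact absurd h (dbq)
          · exact absurd h (dbvm)
          · exact absurd h (dab.symm)
          · exact absurd h (dpb.symm)
          · exact absurd h (dbvmm)
          · exact absurd h (dbv0)
          · exact absurd h (dbq.symm)
          · rfl
          · exact absurd h (dqvm)
          · exact absurd h (daq.symm)
          · exact absurd h (dpq.symm)
          · exact absurd h (dqvmm)
          · exact absurd h (dqv0)
          · exact absurd h (dbvm.symm)
          · exact absurd h (dqvm.symm)
          · rfl
          · exact absurd h (davm.symm)
          · exact absurd h (dpvm.symm)
          · exact absurd h (dvmvmm)
          · exact absurd h (dvmv0)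
          · exact absurd h (dab)
          · exact absurd h (daq)
          · exact absurd h (davm)
          · rfl
          · exact absurd h (dpa.symm)
          · exact absurd h (davmm)
          · exact absurd h (dav0)
          · exact absurd h (dpb)
          · exact absurd h (dpq)
          · exact absurd h (dpvm)
          · exact absurd h (dpa)
          · rfl
          · exact absurd h (dpvmm)
          · exact absurd h (dpv0)
          · exact absurd h (dbvmm.symm)
          · exact absurd h (dqvmm.symm)
          · exact absurd h (dvmvmm.symm)
          · exact absurd h (davmm.symm)
          · exact absurd h (dpvmm.symm)
          · rfl
          · exact absurd h (dv0vmm.symm)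
          · exact absurd h (dbv0.symm)
          · exact absurd h (dqv0.symm)
          · exact absurd h (dvmv0.symm)
          · exact absurd h (dav0.symm)
          · exact absurd h (dpv0.symm)
          · exact absurd h (dv0vmm)
          · rfl
        · intro x y
          fin_cases x <;> fin_cases y
          · exact iff_of_false (G.loopless.irrefl _) (by decide)
          · exact iff_of_true (ebq) (by decide)
          · exact iff_of_true (ebvm) (by decide)
          · exact iff_of_true (eab.symm) (by decide)
          · exact iff_of_false ((fun h => npb h.symm)) (by decide)
          · exact iff_of_false (hb2) (by decide)
          · exact iff_of_true (ebv0) (by decide)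
          · exact iff_of_true (ebq.symm) (by decide)
          · exact iff_of_false (G.loopless.irrefl _) (by decide)
          · exact iff_of_false (nqvm) (by decide)
          · exact iff_of_false ((fun h => naq h.symm)) (by decide)
          · exact iff_of_false ((fun h => npq h.symm)) (by decide)
          · exact iff_of_false (hq2) (by decide)
          · exact iff_of_true (eqv0) (by decide)
          · exact iff_of_true (ebvm.symm) (by decide)
          · exact iff_of_false ((fun h => nqvm h.symm)) (by decide)
          · exact iff_of_false (G.loopless.irrefl _) (by decide)
          · exact iff_of_true (eavm.symm) (by decide)
          · exact iff_of_false ((fun h => npvm h.symm)) (by decide)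
          · exact iff_of_true (evmvmm) (by decide)
          · exact iff_of_true (evmv0) (by decide)
          · exact iff_of_true (eab) (by decide)
          · exact iff_of_false (naq) (by decide)
          · exact iff_of_true (eavm) (by decide)
          · exact iff_of_false (G.loopless.irrefl _) (by decide)
          · exact iff_of_true (epa.symm) (by decide)
          · exact iff_of_true (ha2) (by decide)
          · exact iff_of_true (eav0) (by decide)
          · exact iff_of_false (npb) (by decide)
          · exact iff_of_false (npq) (by decide)
          · exact iff_of_false (npvm) (by decide)
          · exact iff_of_true (epa) (by decide)
          · exact iff_of_false (G.loopless.irrefl _) (by decide)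
          · exact iff_of_false (npvmm) (by decide)
          · exact iff_of_true (epv0) (by decide)
          · exact iff_of_false ((fun h => hb2 h.symm)) (by decide)
          · exact iff_of_false ((fun h => hq2 h.symm)) (by decide)
          · exact iff_of_true (evmvmm.symm) (by decide)
          · exact iff_of_true (ha2.symm) (by decide)
          · exact iff_of_false ((fun h => npvmm h.symm)) (by decide)
          · exact iff_of_false (G.loopless.irrefl _) (by decide)
          · exact iff_of_false ((fun h => nv0vmm h.symm)) (by decide)
          · exact iff_of_true (ebv0.symm) (by decide)
          · exact iff_of_true (eqv0.symm) (by decide)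
          · exact iff_of_true (evmv0.symm) (by decide)
          · exact iff_of_true (eav0.symm) (by decide)
          · exact iff_of_true (epv0.symm) (by decide)
          · exact iff_of_false (nv0vmm) (by decide)
          · exact iff_of_false (G.loopless.irrefl _) (by decide)
    · by_cases hb2 : G.Adj b vmm
      · refine h4tent ⟨⟨⟨![a, p, vm, b, q, vmm, v0], ?_⟩, ?_⟩⟩
        · intro x y h
          fin_cases x <;> fin_cases y
          · rfl
          · exact absurd h (dpa.symm)
          · exact absurd h (davm)
          · exact absurd h (dab)
          · exact absurd h (daq)
          · exact absurd h (davmm)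
          · exact absurd h (dav0)
          · exact absurd h (dpa)
          · rfl
          · exact absurd h (dpvm)
          · exact absurd h (dpb)
          · exact absurd h (dpq)
          · exact absurd h (dpvmm)
          · exact absurd h (dpv0)
          · exact absurd h (davm.symm)
          · exact absurd h (dpvm.symm)
          · rfl
          · exact absurd h (dbvm.symm)
          · exact absurd h (dqvm.symm)
          · exact absurd h (dvmvmm)
          · exact absurd h (dvmv0)
          · exact absurd h (dab.symm)
          · exact absurd h (dpb.symm)
          · exact absurd h (dbvm)
          · rfl
          · exact absurd h (dbq)
          · exact absurd h (dbvmm)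
          · exact absurd h (dbv0)
          · exact absurd h (daq.symm)
          · exact absurd h (dpq.symm)
          · exact absurd h (dqvm)
          · exact absurd h (dbq.symm)
          · rfl
          · exact absurd h (dqvmm)
          · exact absurd h (dqv0)
          · exact absurd h (davmm.symm)
          · exact absurd h (dpvmm.symm)
          · exact absurd h (dvmvmm.symm)
          · exact absurd h (dbvmm.symm)
          · exact absurd h (dqvmm.symm)
          · rfl
          · exact absurd h (dv0vmm.symm)
          · exact absurd h (dav0.symm)
          · exact absurd h (dpv0.symm)
          · exact absurd h (dvmv0.symm)
          · exact absurd h (dbv0.symm)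
          · exact absurd h (dqv0.symm)
          · exact absurd h (dv0vmm)
          · rfl
        · intro x y
          fin_cases x <;> fin_cases y
          · exact iff_of_false (G.loopless.irrefl _) (by decide)
          · exact iff_of_true (epa.symm) (by decide)
          · exact iff_of_true (eavm) (by decide)
          · exact iff_of_true (eab) (by decide)
          · exact iff_of_false (naq) (by decide)
          · exact iff_of_false (ha2) (by decide)
          · exact iff_of_true (eav0) (by decide)
          · exact iff_of_true (epa) (by decide)
          · exact iff_of_false (G.loopless.irrefl _) (by decide)
          · exact iff_of_false (npvm) (by decide)
          · exact iff_of_false (npb) (by decide)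
          · exact iff_of_false (npq) (by decide)
          · exact iff_of_false (npvmm) (by decide)
          · exact iff_of_true (epv0) (by decide)
          · exact iff_of_true (eavm.symm) (by decide)
          · exact iff_of_false ((fun h => npvm h.symm)) (by decide)
          · exact iff_of_false (G.loopless.irrefl _) (by decide)
          · exact iff_of_true (ebvm.symm) (by decide)
          · exact iff_of_false ((fun h => nqvm h.symm)) (by decide)
          · exact iff_of_true (evmvmm) (by decide)
          · exact iff_of_true (evmv0) (by decide)
          · exact iff_of_true (eab.symm) (by decide)
          · exact iff_of_false ((fun h => npb h.symm)) (by decide)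
          · exact iff_of_true (ebvm) (by decide)
          · exact iff_of_false (G.loopless.irrefl _) (by decide)
          · exact iff_of_true (ebq) (by decide)
          · exact iff_of_true (hb2) (by decide)
          · exact iff_of_true (ebv0) (by decide)
          · exact iff_of_false ((fun h => naq h.symm)) (by decide)
          · exact iff_of_false ((fun h => npq h.symm)) (by decide)
          · exact iff_of_false (nqvm) (by decide)
          · exact iff_of_true (ebq.symm) (by decide)
          · exact iff_of_false (G.loopless.irrefl _) (by decide)
          · exact iff_of_false (hq2) (by decide)
          · exact iff_of_true (eqv0) (by decide)
          · exact iff_of_false ((fun h => ha2 h.symm)) (by decide)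
          · exact iff_of_false ((fun h => npvmm h.symm)) (by decide)
          · exact iff_of_true (evmvmm.symm) (by decide)
          · exact iff_of_true (hb2.symm) (by decide)
          · exact iff_of_false ((fun h => hq2 h.symm)) (by decide)
          · exact iff_of_false (G.loopless.irrefl _) (by decide)
          · exact iff_of_false ((fun h => nv0vmm h.symm)) (by decide)
          · exact iff_of_true (eav0.symm) (by decide)
          · exact iff_of_true (epv0.symm) (by decide)
          · exact iff_of_true (evmv0.symm) (by decide)
          · exact iff_of_true (ebv0.symm) (by decide)
          · exact iff_of_true (eqv0.symm) (by decide)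
          · exact iff_of_false (nv0vmm) (by decide)
          · exact iff_of_false (G.loopless.irrefl _) (by decide)
      · refine hnet ⟨⟨⟨![a, b, vm, p, q, vmm], ?_⟩, ?_⟩⟩
        · intro x y h
          fin_cases x <;> fin_cases y
          · rfl
          · exact absurd h (dab)
          · exact absurd h (davm)
          · exact absurd h (dpa.symm)
          · exact absurd h (daq)
          · exact absurd h (davmm)
          · exact absurd h (dab.symm)
          · rfl
          · exact absurd h (dbvm)
          · exact absurd h (dpb.symm)
          · exact absurd h (dbq)
          · exact absurd h (dbvmm)
          · exact absurd h (davm.symm)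
          · exact absurd h (dbvm.symm)
          · rfl
          · exact absurd h (dpvm.symm)
          · exact absurd h (dqvm.symm)
          · exact absurd h (dvmvmm)
          · exact absurd h (dpa)
          · exact absurd h (dpb)
          · exact absurd h (dpvm)
          · rfl
          · exact absurd h (dpq)
          · exact absurd h (dpvmm)
          · exact absurd h (daq.symm)
          · exact absurd h (dbq.symm)
          · exact absurd h (dqvm)
          · exact absurd h (dpq.symm)
          · rfl
          · exact absurd h (dqvmm)
          · exact absurd h (davmm.symm)
          · exact absurd h (dbvmm.symm)
          · exact absurd h (dvmvmm.symm)
          · exact absurd h (dpvmm.symm)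
          · exact absurd h (dqvmm.symm)
          · rfl
        · intro x y
          fin_cases x <;> fin_cases y
          · exact iff_of_false (G.loopless.irrefl _) (by decide)
          · exact iff_of_true (eab) (by decide)
          · exact iff_of_true (eavm) (by decide)
          · exact iff_of_true (epa.symm) (by decide)
          · exact iff_of_false (naq) (by decide)
          · exact iff_of_false (ha2) (by decide)
          · exact iff_of_true (eab.symm) (by decide)
          · exact iff_of_false (G.loopless.irrefl _) (by decide)
          · exact iff_of_true (ebvm) (by decide)
          · exact iff_of_false ((fun h => npb h.symm)) (by decide)
          · exact iff_of_true (ebq) (by decide)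
          · exact iff_of_false (hb2) (by decide)
          · exact iff_of_true (eavm.symm) (by decide)
          · exact iff_of_true (ebvm.symm) (by decide)
          · exact iff_of_false (G.loopless.irrefl _) (by decide)
          · exact iff_of_false ((fun h => npvm h.symm)) (by decide)
          · exact iff_of_false ((fun h => nqvm h.symm)) (by decide)
          · exact iff_of_true (evmvmm) (by decide)
          · exact iff_of_true (epa) (by decide)
          · exact iff_of_false (npb) (by decide)
          · exact iff_of_false (npvm) (by decide)
          · exact iff_of_false (G.loopless.irrefl _) (by decide)
          · exact iff_of_false (npq) (by decide)
          · exact iff_of_false (npvmm) (by decide)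
          · exact iff_of_false ((fun h => naq h.symm)) (by decide)
          · exact iff_of_true (ebq.symm) (by decide)
          · exact iff_of_false (nqvm) (by decide)
          · exact iff_of_false ((fun h => npq h.symm)) (by decide)
          · exact iff_of_false (G.loopless.irrefl _) (by decide)
          · exact iff_of_false (hq2) (by decide)
          · exact iff_of_false ((fun h => ha2 h.symm)) (by decide)
          · exact iff_of_false ((fun h => hb2 h.symm)) (by decide)
          · exact iff_of_true (evmvmm.symm) (by decide)
          · exact iff_of_false ((fun h => npvmm h.symm)) (by decide)
          · exact iff_of_false ((fun h => hq2 h.symm)) (by decide)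
          · exact iff_of_false (G.loopless.irrefl _) (by decide)

/-- Claim 5 of the paper, `A_i` case: under the stated forbidden
induced subgraphs and structural facts, no two vertices of `A_i` are the two internal
vertices of an induced `P_4` of `G[A_i ∪ O_i ∪ B_i]`. -/
theorem stmt17 {V : Type*} [Finite V] (G : SimpleGraph V)
    (hnet : ¬ HasInduced netG G)
    (h4w : ¬ HasInduced (wheelG 4) G) (h5w : ¬ HasInduced (wheelG 5) G)
    (htent : ¬ HasInduced tentG G) (h4tent : ¬ HasInduced (kTent 4) G)
    (hknet : ∀ k, 2 ≤ k → ¬ HasInduced (kNet k) G)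
    (hstar4 : ¬ HasInduced (cycStar 4) G) (hG1 : ¬ HasInduced G1 G)
    {n : ℕ} [NeZero n] (hn : 4 ≤ n) (c : cycG n ↪g G) (i : Fin n)
    (hAclique : G.IsClique (Aset G ⇑c i)) (hBclique : G.IsClique (Bset G ⇑c i))
    (hoadj : ∀ u, G.Adj u (c (i - 1)) → G.Adj u (c i) → G.Adj u (c (i + 1)) →
      ∀ o ∈ Oset G ⇑c i, G.Adj u o) :
    ¬ ∃ f : pathG 4 ↪g G,
      Set.range ⇑f ⊆ Aset G ⇑c i ∪ Oset G ⇑c i ∪ Bset G ⇑c i ∧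
      f 1 ∈ Aset G ⇑c i ∧ f 2 ∈ Aset G ⇑c i := by
  rintro ⟨f, hsub, hfa, hfb⟩
  have hinj := f.injective
  have epa : G.Adj (f 0) (f 1) := f.map_rel_iff.mpr (by decide)
  have eab : G.Adj (f 1) (f 2) := f.map_rel_iff.mpr (by decide)
  have ebq : G.Adj (f 2) (f 3) := f.map_rel_iff.mpr (by decide)
  have npb : ¬ G.Adj (f 0) (f 2) := fun h => absurd (f.map_rel_iff.mp h) (by decide)
  have npq : ¬ G.Adj (f 0) (f 3) := fun h => absurd (f.map_rel_iff.mp h) (by decide)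
  have naq : ¬ G.Adj (f 1) (f 3) := fun h => absurd (f.map_rel_iff.mp h) (by decide)
  have dpa : f 0 ≠ f 1 := fun h => absurd (hinj h) (by decide)
  have dpb : f 0 ≠ f 2 := fun h => absurd (hinj h) (by decide)
  have dpq : f 0 ≠ f 3 := fun h => absurd (hinj h) (by decide)
  have dab : f 1 ≠ f 2 := fun h => absurd (hinj h) (by decide)
  have daq : f 1 ≠ f 3 := fun h => absurd (hinj h) (by decide)
  have dbq : f 2 ≠ f 3 := fun h => absurd (hinj h) (by decide)
  have hmem : ∀ x : Fin 4, f x ∈ Aset G ⇑c i ∪ Oset G ⇑c i ∪ Bset G ⇑c i :=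
    fun x => hsub ⟨x, rfl⟩
  have hpoff : f 0 ∉ Set.range ⇑c := by rcases hmem 0 with (h | h) | h <;> exact h.1
  have hqoff : f 3 ∉ Set.range ⇑c := by rcases hmem 3 with (h | h) | h <;> exact h.1
  have haoff : f 1 ∉ Set.range ⇑c := hfa.1
  have hboff : f 2 ∉ Set.range ⇑c := hfb.1
  have h10 : i - 1 ≠ i := by rw [Ne, sub_eq_self]; exact fin_one_ne_zero hn
  have h20 : i - 1 - 1 ≠ i := by rw [sub_sub, Ne, sub_eq_self]; exact fin_two_ne_zero hn
  have h21 : i - 1 - 1 ≠ i - 1 := by rw [Ne, sub_eq_self]; exact fin_one_ne_zero hn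
  have hcinj := c.injective
  have dvmv0 : c (i-1) ≠ c i := fun h => h10 (hcinj h)
  have dvmvmm : c (i-1) ≠ c (i-1-1) := fun h => h21 (hcinj h).symm
  have dv0vmm : c i ≠ c (i-1-1) := fun h => h20 (hcinj h).symm
  have ecyc : ∀ x : Fin n, G.Adj (c x) (c (x+1)) := by
    intro x
    refine c.map_rel_iff.mpr ?_
    rw [cycG, SimpleGraph.fromRel_adj]
    exact ⟨fun h => fin_one_ne_zero hn (add_eq_left.mp h.symm),
      Or.inl (fin_succ_val hn x)⟩
  have evmv0 : G.Adj (c (i-1)) (c i) := by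
    have h := ecyc (i-1); rwa [sub_add_cancel] at h
  have evmmvm : G.Adj (c (i-1-1)) (c (i-1)) := by
    have h := ecyc (i-1-1); rwa [sub_add_cancel] at h
  have nv0vmm : ¬ G.Adj (c i) (c (i-1-1)) := by
    intro h
    have hcy := c.map_rel_iff.mp h
    rw [cycG, SimpleGraph.fromRel_adj] at hcy
    rcases hcy with ⟨-, hor | hor⟩
    · have he : i + 1 = i - 1 - 1 := Fin.ext (by rw [← fin_succ_val hn i]; exact hor)
      have h3 : i + 1 + 1 + 1 = i := by rw [he, sub_add_cancel, sub_add_cancel]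
      rw [add_assoc, add_assoc] at h3
      exact fin_three_ne_zero hn (add_eq_left.mp h3)
    · have he : i - 1 - 1 + 1 = i := Fin.ext (by rw [← fin_succ_val hn (i - 1 - 1)]; exact hor)
      rw [sub_add_cancel] at he
      exact h10 he
  have eavm : G.Adj (f 1) (c (i-1)) := hfa.2.1
  have eav0 : G.Adj (f 1) (c i) := hfa.2.2.1
  have ebvm : G.Adj (f 2) (c (i-1)) := hfb.2.1
  have ebv0 : G.Adj (f 2) (c i) := hfb.2.2.1
  have hpOB : f 0 ∈ Oset G ⇑c i ∪ Bset G ⇑c i := by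
    rcases hmem 0 with (h | h) | h
    · exact absurd (hAclique h hfb dpb) npb
    · exact Or.inl h
    · exact Or.inr h
  have hqOB : f 3 ∈ Oset G ⇑c i ∪ Bset G ⇑c i := by
    rcases hmem 3 with (h | h) | h
    · exact absurd (hAclique hfa h daq) naq
    · exact Or.inl h
    · exact Or.inr h
  have dpvm : f 0 ≠ c (i-1) := fun h => hpoff ⟨i-1, h.symm⟩
  have dpv0 : f 0 ≠ c i := fun h => hpoff ⟨i, h.symm⟩
  have dpvmm : f 0 ≠ c (i-1-1) := fun h => hpoff ⟨i-1-1, h.symm⟩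
  have davm : f 1 ≠ c (i-1) := fun h => haoff ⟨i-1, h.symm⟩
  have dav0 : f 1 ≠ c i := fun h => haoff ⟨i, h.symm⟩
  have davmm : f 1 ≠ c (i-1-1) := fun h => haoff ⟨i-1-1, h.symm⟩
  have dbvm : f 2 ≠ c (i-1) := fun h => hboff ⟨i-1, h.symm⟩
  have dbv0 : f 2 ≠ c i := fun h => hboff ⟨i, h.symm⟩
  have dbvmm : f 2 ≠ c (i-1-1) := fun h => hboff ⟨i-1-1, h.symm⟩
  have dqvm : f 3 ≠ c (i-1) := fun h => hqoff ⟨i-1, h.symm⟩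
  have dqv0 : f 3 ≠ c i := fun h => hqoff ⟨i, h.symm⟩
  have dqvmm : f 3 ≠ c (i-1-1) := fun h => hqoff ⟨i-1-1, h.symm⟩
  rcases hpOB with hpO | hpB
  · rcases hqOB with hqO | hqB
    · exact p4aux G hnet htent h4tent hstar4 hG1 (f 0) (f 1) (f 2) (f 3)
        (c (i-1)) (c i) (c (i-1-1))
        dpa dpb dpq dpvm dpv0 dpvmm dab daq davm dav0 davmm dbq dbvm dbv0 dbvmm
        dqvm dqv0 dqvmm dvmv0 dvmvmm dv0vmm
        epa eab ebq ((hpO.2 i).mpr rfl) ((hqO.2 i).mpr rfl)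
        eavm eav0 ebvm ebv0 evmv0 evmmvm.symm
        npb npq naq
        (fun h => h10 ((hpO.2 (i-1)).mp h)) (fun h => h20 ((hpO.2 (i-1-1)).mp h))
        (fun h => h10 ((hqO.2 (i-1)).mp h)) nv0vmm
    · exact p4aux G hnet htent h4tent hstar4 hG1 (f 0) (f 1) (f 2) (f 3)
        (c (i-1)) (c i) (c (i-1-1))
        dpa dpb dpq dpvm dpv0 dpvmm dab daq davm dav0 davmm dbq dbvm dbv0 dbvmm
        dqvm dqv0 dqvmm dvmv0 dvmvmm dv0vmm
        epa eab ebq ((hpO.2 i).mpr rfl) hqB.2.1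
        eavm eav0 ebvm ebv0 evmv0 evmmvm.symm
        npb npq naq
        (fun h => h10 ((hpO.2 (i-1)).mp h)) (fun h => h20 ((hpO.2 (i-1-1)).mp h))
        (fun h => npq (hoadj (f 3) h hqB.2.1 hqB.2.2.1 (f 0) hpO).symm) nv0vmm
  · rcases hqOB with hqO | hqB
    · exact p4aux G hnet htent h4tent hstar4 hG1 (f 3) (f 2) (f 1) (f 0)
        (c (i-1)) (c i) (c (i-1-1))
        dbq.symm daq.symm dpq.symm dqvm dqv0 dqvmm dab.symm dpb.symm dbvm dbv0 dbvmm
        dpa.symm davm dav0 davmm dpvm dpv0 dpvmm dvmv0 dvmvmm dv0vmm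
        ebq.symm eab.symm epa.symm ((hqO.2 i).mpr rfl) hpB.2.1
        ebvm ebv0 eavm eav0 evmv0 evmmvm.symm
        (fun h => naq h.symm) (fun h => npq h.symm) (fun h => npb h.symm)
        (fun h => h10 ((hqO.2 (i-1)).mp h)) (fun h => h20 ((hqO.2 (i-1-1)).mp h))
        (fun h => npq (hoadj (f 0) h hpB.2.1 hpB.2.2.1 (f 3) hqO)) nv0vmm
    · exact npq (hBclique hpB hqB dpq)
end
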